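/- arXiv:2505.10503 — 3 statements merged into one kernel-verified Lean document; each statement's English description precedes it below -/
import Mathlib

section
/- Let N ≥ 3 and p > 1. Assume condition (K0), that f is a nonnegative continuous function on (0,∞) with ∫₀¹ r f(r) dr < ∞, and μ ≥ 0. Let u ∈ C²((0,r_1)) be a positive solution of u'' + ((N-1)/r)u' + K(r)u^p + μ f(r) = 0 on (0, r_1) for some r_1 > 0 such that lim_{r→0+} u(r) exists in (0, ∞]. Then there exist r_0 ∈ (0, r_1] and C_0 > 0 such that r^θ u(r) ≤ C_0 for all r ∈ (0, r_0). -/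
open Real Filter Set MeasureTheory Topology

noncomputable section

/-- The critical Sobolev exponent `p_S(α) = (N+2+2α)/(N-2)`. -/
def pS (N : ℕ) (α : ℝ) : ℝ := ((N : ℝ) + 2 + 2 * α) / ((N : ℝ) - 2)

/-- The condition `p < p_JL(α)` where `p_JL` is the Joseph–Lundgren exponent
(`p_JL(α) = ∞` if `N ≤ 10 + 4α`). -/
def ltPJL (N : ℕ) (α p : ℝ) : Prop :=
  (N : ℝ) ≤ 10 + 4 * α ∨
    (10 + 4 * α < (N : ℝ) ∧
      p < 1 + 2 * (2 + α) / ((N : ℝ) - 4 - α - Real.sqrt ((2 + α) * (2 * (N : ℝ) - 2 + α))))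

/-- `θ = (2+α)/(p-1)`. -/
def θconst (p α : ℝ) : ℝ := (2 + α) / (p - 1)

/-- `γ = (θ(N-2-θ)/k0)^{1/(p-1)}`. -/
def γconst (N : ℕ) (p α k0 : ℝ) : ℝ :=
  (θconst p α * ((N : ℝ) - 2 - θconst p α) / k0) ^ (1 / (p - 1))

/-- Condition (K0): `K` positive continuous on `(0,∞)`, `α > -2`, `k0 > 0`,
`r^{-α} K(r) → k0` as `r → 0+`. -/
def CondK0 (K : ℝ → ℝ) (α k0 : ℝ) : Prop :=
  (∀ r : ℝ, 0 < r → 0 < K r) ∧ ContinuousOn K (Ioi 0) ∧ -2 < α ∧ 0 < k0 ∧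
    Tendsto (fun r : ℝ => r ^ (-α) * K r) (𝓝[>] 0) (𝓝 k0)

/-- Condition (f0): `f` nonnegative continuous on `(0,∞)`, not identically zero,
with `f(r) ≤ C r^ν` near `0` for some `ν > -2`. -/
def CondF0 (f : ℝ → ℝ) : Prop :=
  ContinuousOn f (Ioi 0) ∧ (∀ r : ℝ, 0 < r → 0 ≤ f r) ∧ (∃ r : ℝ, 0 < r ∧ f r ≠ 0) ∧
    ∃ ν : ℝ, -2 < ν ∧ ∃ C : ℝ, 0 < C ∧ ∃ ρ0 : ℝ, 0 < ρ0 ∧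
      ∀ r : ℝ, 0 < r → r < ρ0 → f r ≤ C * r ^ ν

/-- Condition (K∞): `β > -2`, `k∞ > 0`, `r^{-β}K(r) → k∞` as `r → ∞`. -/
def CondKinf (K : ℝ → ℝ) (β kinf : ℝ) : Prop :=
  -2 < β ∧ 0 < kinf ∧ Tendsto (fun r : ℝ => r ^ (-β) * K r) atTop (𝓝 kinf)

/-- Condition (f∞): `f(r) ≤ C r^{-q}` for large `r`, for some `q > N`. -/
def CondFinf (N : ℕ) (f : ℝ → ℝ) : Prop :=
  ∃ q : ℝ, (N : ℝ) < q ∧ ∃ C : ℝ, 0 < C ∧ ∃ R0 : ℝ, 0 < R0 ∧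
    ∀ r : ℝ, R0 < r → f r ≤ C * r ^ (-q)

/-- `u` is a positive `C²` solution of `u'' + (N-1)/r u' + K u^p + μ f = 0` on `s`. -/
def SolOn (N : ℕ) (p μ : ℝ) (K f u : ℝ → ℝ) (s : Set ℝ) : Prop :=
  ContDiffOn ℝ 2 u s ∧ (∀ r ∈ s, 0 < u r) ∧
    ∀ r ∈ s, deriv (deriv u) r + ((N : ℝ) - 1) / r * deriv u r + K r * u r ^ p + μ * f r = 0

/-- Bounded solution of (E): solution on `(0,∞)` with a finite limit at `0+`. -/
def BoundedSol (N : ℕ) (p μ : ℝ) (K f u : ℝ → ℝ) : Prop :=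
  SolOn N p μ K f u (Ioi 0) ∧ ∃ l : ℝ, Tendsto u (𝓝[>] 0) (𝓝 l)

/-- Singular solution of (E): solution on `(0,∞)` with `u(r) → ∞` as `r → 0+`. -/
def SingularSol (N : ℕ) (p μ : ℝ) (K f u : ℝ → ℝ) : Prop :=
  SolOn N p μ K f u (Ioi 0) ∧ Tendsto u (𝓝[>] 0) atTop

/-- `‖u‖_∞ = sup_{r>0} u(r)`. -/
def supNorm (u : ℝ → ℝ) : ℝ := ⨆ r : Ioi (0 : ℝ), u r.1

/-- Fast decay: `limsup_{r→∞} r^{N-2} u(r) < ∞`. -/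
def FastDecay (N : ℕ) (u : ℝ → ℝ) : Prop :=
  ∃ M : ℝ, ∀ᶠ r in atTop, r ^ ((N : ℝ) - 2) * u r ≤ M

/-- Slow decay: `limsup_{r→∞} r^{N-2} u(r) = ∞`. -/
def SlowDecay (N : ℕ) (u : ℝ → ℝ) : Prop :=
  ∀ M : ℝ, ∃ᶠ r in atTop, M < r ^ ((N : ℝ) - 2) * u r

private lemma alg_aux (n1 α ρ X k0 : ℝ) (hρ : 0 < ρ) :
    ρ * ((ρ/2) * ((k0/2) * (ρ/2)^(n1+α) * X) / (2*ρ)^n1)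
      = (k0/4) * ((2:ℝ)^(n1+α))⁻¹ * ((2:ℝ)^n1)⁻¹ * ρ^((2:ℝ)+α) * X := by
  have h2 : (0:ℝ) < 2 := two_pos
  have e1 : ((ρ/2):ℝ)^(n1+α) = ρ^(n1+α) / (2:ℝ)^(n1+α) := Real.div_rpow hρ.le h2.le _
  have e2 : ((2*ρ):ℝ)^n1 = (2:ℝ)^n1 * ρ^n1 := Real.mul_rpow h2.le hρ.le
  have e3 : ρ^(n1+α) = ρ^n1 * ρ^α := Real.rpow_add hρ _ _
  have e4 : ρ^((2:ℝ)+α) = ρ^(2:ℝ) * ρ^α := Real.rpow_add hρ _ _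
  have e5 : ρ^(2:ℝ) = ρ * ρ := by rw [Real.rpow_two]; ring
  have hn : (0:ℝ) < ρ^n1 := Real.rpow_pos_of_pos hρ _
  have h2n : (0:ℝ) < (2:ℝ)^n1 := Real.rpow_pos_of_pos h2 _
  have h2na : (0:ℝ) < (2:ℝ)^(n1+α) := Real.rpow_pos_of_pos h2 _
  rw [e1, e2, e3, e4, e5]
  field_simp
  ring


/-- Lemma 2.1 (i): a priori bound `r^θ u(r) ≤ C₀` near `0` for
positive solutions with a (possibly infinite) limit at `0+`. -/
theorem stmt6 (N : ℕ) (p μ α k0 r1 : ℝ) (K f u : ℝ → ℝ)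
    (hN : 3 ≤ N) (hp1 : 1 < p) (hμ : 0 ≤ μ)
    (hK : CondK0 K α k0)
    (hfc : ContinuousOn f (Ioi 0)) (hfnn : ∀ r : ℝ, 0 < r → 0 ≤ f r)
    (hfint : IntegrableOn (fun r : ℝ => r * f r) (Ioo 0 1))
    (hr1 : 0 < r1)
    (hu : SolOn N p μ K f u (Ioo 0 r1))
    (hlim : (∃ l : ℝ, 0 < l ∧ Tendsto u (𝓝[>] 0) (𝓝 l)) ∨ Tendsto u (𝓝[>] 0) atTop) :
    ∃ r0 : ℝ, 0 < r0 ∧ r0 ≤ r1 ∧ ∃ C0 : ℝ, 0 < C0 ∧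
      ∀ r : ℝ, 0 < r → r < r0 → r ^ θconst p α * u r ≤ C0 := by
  obtain ⟨Kpos, Kcont, hα, hk0, Ktend⟩ := hK
  have hp0 : (0:ℝ) < p - 1 := by linarith
  have hθpos : 0 < θconst p α := div_pos (by linarith) hp0
  obtain ⟨hC2, hpos, hode⟩ := hu
  rcases hlim with ⟨l, hl, htend⟩ | htop
  · -- bounded case
    have h1 : ∀ᶠ r in 𝓝[>] (0:ℝ), u r < l + 1 :=
      htend.eventually_lt_const (by linarith)
    obtain ⟨ε, hε, hball⟩ := Metric.eventually_nhds_iff.mp (eventually_nhdsWithin_iff.mp h1)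
    set r0 : ℝ := min ε r1 with hr0def
    have hr0pos : 0 < r0 := lt_min hε hr1
    refine ⟨r0, hr0pos, min_le_right _ _, max 1 (r0 ^ θconst p α * (l+1)), lt_of_lt_of_le one_pos (le_max_left _ _), ?_⟩
    intro r hr hrlt
    have hru : u r < l + 1 := by
      apply hball _ hr
      rw [Real.dist_eq, sub_zero, abs_of_pos hr]
      exact hrlt.trans_le (min_le_left _ _)
    have hrIoo : r ∈ Ioo (0:ℝ) r1 := ⟨hr, hrlt.trans_le (min_le_right _ _)⟩
    have h2 : r ^ θconst p α ≤ r0 ^ θconst p α :=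
      Real.rpow_le_rpow hr.le hrlt.le hθpos.le
    calc r ^ θconst p α * u r ≤ r0 ^ θconst p α * (l+1) := by
          apply mul_le_mul h2 hru.le (hpos r hrIoo).le (Real.rpow_nonneg hr0pos.le _)
      _ ≤ _ := le_max_right _ _
  · -- singular case
    set n1 : ℝ := (N:ℝ) - 1 with hn1def
    have hN3 : (3:ℝ) ≤ (N:ℝ) := by exact_mod_cast hN
    have hn1pos : 0 < n1 := by simp only [hn1def]; linarith
    have hopen : IsOpen (Ioo (0:ℝ) r1) := isOpen_Ioo
    have hd1 : ∀ r ∈ Ioo (0:ℝ) r1, HasDerivAt u (deriv u r) r := fun r hr =>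
      ((hC2.differentiableOn (by norm_num)).differentiableAt (hopen.mem_nhds hr)).hasDerivAt
    have hcd1 : ContDiffOn ℝ 1 (deriv u) (Ioo (0:ℝ) r1) := hC2.deriv_of_isOpen hopen (by norm_num)
    have hd2 : ∀ r ∈ Ioo (0:ℝ) r1, HasDerivAt (deriv u) (deriv (deriv u) r) r := fun r hr =>
      ((hcd1.differentiableOn (by norm_num)).differentiableAt (hopen.mem_nhds hr)).hasDerivAt
    have hucont : ContinuousOn u (Ioo (0:ℝ) r1) := hC2.continuousOn
    set F : ℝ → ℝ := fun r => -(r ^ n1 * deriv u r) with hFdef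
    set G : ℝ → ℝ := fun r => r ^ n1 * (K r * u r ^ p + μ * f r) with hGdef
    have hGnonneg : ∀ r ∈ Ioo (0:ℝ) r1, 0 ≤ G r := by
      intro r hr
      apply mul_nonneg (Real.rpow_nonneg hr.1.le _)
      exact add_nonneg (mul_nonneg (Kpos r hr.1).le (Real.rpow_nonneg (hpos r hr).le _))
        (mul_nonneg hμ (hfnn r hr.1))
    have hdF : ∀ r ∈ Ioo (0:ℝ) r1, HasDerivAt F (G r) r := by
      intro r hr
      have hr0 : 0 < r := hr.1
      have h1 : HasDerivAt (fun s : ℝ => s ^ n1) (n1 * r ^ (n1 - 1)) r :=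
        Real.hasDerivAt_rpow_const (Or.inl hr0.ne')
      have h2 := (h1.mul (hd2 r hr)).neg
      refine h2.congr_deriv ?_
      have hode' := hode r hr
      have hrpow : r ^ (n1 - 1) = r ^ n1 / r := Real.rpow_sub_one hr0.ne' n1
      have hdd : deriv (deriv u) r = -(n1 / r * deriv u r + (K r * u r ^ p + μ * f r)) := by
        simp only [hn1def]; linarith
      simp only [hGdef, hdd, hrpow]
      field_simp
      ring
    have hFcont : ContinuousOn F (Ioo (0:ℝ) r1) := fun r hr =>
      (hdF r hr).continuousAt.continuousWithinAt
    have hFmono : MonotoneOn F (Ioo (0:ℝ) r1) := by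
      apply monotoneOn_of_deriv_nonneg (convex_Ioo 0 r1) hFcont
      · intro r hr
        rw [interior_Ioo] at hr
        exact (hdF r hr).differentiableAt.differentiableWithinAt
      · intro r hr
        rw [interior_Ioo] at hr
        rw [(hdF r hr).deriv]
        exact hGnonneg r hr
    have hderiv_nonpos : ∀ r ∈ Ioo (0:ℝ) r1, deriv u r ≤ 0 := by
      intro r hr
      by_contra hcon
      push_neg at hcon
      have hrn : 0 < r ^ n1 := Real.rpow_pos_of_pos hr.1 _
      have hFr : F r < 0 := by
        simp only [hFdef, neg_lt, neg_zero]; positivity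
      have hup : ∀ s ∈ Ioo (0:ℝ) r, 0 < deriv u s := by
        intro s hs
        have hs1 : s ∈ Ioo (0:ℝ) r1 := ⟨hs.1, hs.2.trans hr.2⟩
        have hmle := hFmono hs1 hr hs.2.le
        have hsp : 0 < s ^ n1 := Real.rpow_pos_of_pos hs.1 _
        simp only [hFdef] at hmle hFr
        nlinarith
      have hmono : StrictMonoOn u (Ioo (0:ℝ) r) := by
        apply strictMonoOn_of_deriv_pos (convex_Ioo 0 r)
          (hucont.mono (fun s hs => ⟨hs.1, hs.2.trans hr.2⟩))
        intro s hs
        rw [interior_Ioo] at hs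
        exact hup s hs
      have hhalf : r/2 ∈ Ioo (0:ℝ) r := ⟨by linarith [hr.1], by linarith [hr.1]⟩
      have hev : ∀ᶠ s in 𝓝[>] (0:ℝ), u (r/2) < u s := htop.eventually_gt_atTop _
      have hev2 : ∀ᶠ s in 𝓝[>] (0:ℝ), s < r/2 :=
        eventually_nhdsWithin_of_eventually_nhds (eventually_lt_nhds (by linarith [hr.1]))
      obtain ⟨s, hs1, hs2, hs3⟩ := (hev.and (hev2.and self_mem_nhdsWithin)).exists
      exact absurd (hmono ⟨hs3, by linarith [hr.1]⟩ hhalf hs2) (by linarith)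
    have hFnonneg : ∀ r ∈ Ioo (0:ℝ) r1, 0 ≤ F r := by
      intro r hr
      have := hderiv_nonpos r hr
      have hrn : 0 ≤ r ^ n1 := (Real.rpow_pos_of_pos hr.1 _).le
      simp only [hFdef, neg_nonneg]
      exact mul_nonpos_of_nonneg_of_nonpos hrn this
    have hanti : AntitoneOn u (Ioo (0:ℝ) r1) := by
      apply antitoneOn_of_deriv_nonpos (convex_Ioo 0 r1) hucont
      · intro s hs
        rw [interior_Ioo] at hs
        exact (hd1 s hs).differentiableAt.differentiableWithinAt
      · intro s hs
        rw [interior_Ioo] at hs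
        exact hderiv_nonpos s hs
    -- K lower bound near 0
    obtain ⟨δ, hδ, hKδ⟩ : ∃ δ, 0 < δ ∧ ∀ s, 0 < s → s < δ → k0/2 * s ^ α ≤ K s := by
      have hKev : ∀ᶠ s in 𝓝[>] (0:ℝ), k0/2 < s ^ (-α) * K s :=
        Ktend.eventually_const_lt (by linarith)
      obtain ⟨ε, hε, hb⟩ := Metric.eventually_nhds_iff.mp (eventually_nhdsWithin_iff.mp hKev)
      refine ⟨ε, hε, fun s hs1 hs2 => ?_⟩
      have h := hb (y := s) (by rw [Real.dist_eq, sub_zero, abs_of_pos hs1]; exact hs2) hs1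
      have hsp : 0 < s ^ α := Real.rpow_pos_of_pos hs1 α
      rw [Real.rpow_neg hs1.le] at h
      have h2 := mul_lt_mul_of_pos_right h hsp
      rw [mul_assoc, mul_comm (K s), ← mul_assoc, inv_mul_cancel₀ hsp.ne', one_mul] at h2
      linarith
    -- main estimate
    set c : ℝ := (k0/4) * ((2:ℝ)^(n1+α))⁻¹ * ((2:ℝ)^n1)⁻¹ with hcdef
    have h2na : (0:ℝ) < (2:ℝ)^(n1+α) := Real.rpow_pos_of_pos two_pos _
    have h2n : (0:ℝ) < (2:ℝ)^n1 := Real.rpow_pos_of_pos two_pos _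
    have hcpos : 0 < c := by rw [hcdef]; positivity
    set r0 : ℝ := min (r1/2) δ with hr0def
    have hr0pos : 0 < r0 := lt_min (by linarith) hδ
    have key : ∀ ρ, 0 < ρ → ρ < r0 → c * ρ ^ ((2:ℝ)+α) * u ρ ^ p ≤ u ρ := by
      intro ρ hρ hρlt
      have hρr1 : ρ < r1/2 := hρlt.trans_le (min_le_left _ _)
      have hρδ : ρ < δ := hρlt.trans_le (min_le_right _ _)
      have hρmem : ρ ∈ Ioo (0:ℝ) r1 := ⟨hρ, by linarith⟩
      have h2ρmem : (2*ρ) ∈ Ioo (0:ℝ) r1 := ⟨by linarith, by linarith⟩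
      have hhmem : (ρ/2) ∈ Ioo (0:ℝ) r1 := ⟨by linarith, by linarith⟩
      have hn1α : (0:ℝ) ≤ n1 + α := by simp only [hn1def]; linarith
      -- Step A
      have hsubA : Icc (ρ/2) ρ ⊆ Ioo (0:ℝ) r1 := fun s hs =>
        ⟨by linarith [hs.1], by linarith [hs.2]⟩
      have hGcont : ContinuousOn G (Icc (ρ/2) ρ) := by
        have hsp : ∀ s ∈ Icc (ρ/2) ρ, (0:ℝ) < s := fun s hs => by linarith [hs.1]
        apply ContinuousOn.mul
        · exact continuousOn_id.rpow_const (fun s hs => Or.inl (hsp s hs).ne')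
        · apply ContinuousOn.add
          · exact (Kcont.mono (fun s hs => hsp s hs)).mul
              ((hucont.mono hsubA).rpow_const (fun s hs => Or.inl (hpos s (hsubA hs)).ne'))
          · exact continuousOn_const.mul (hfc.mono (fun s hs => hsp s hs))
      have hFTCA : ∫ s in (ρ/2)..ρ, G s = F ρ - F (ρ/2) := by
        apply intervalIntegral.integral_eq_sub_of_hasDerivAt
        · intro s hs
          rw [uIcc_of_le (by linarith)] at hs
          exact hdF s (hsubA hs)
        · exact ContinuousOn.intervalIntegrable (by rwa [uIcc_of_le (by linarith)])
      have hptA : ∀ s ∈ Icc (ρ/2) ρ, (k0/2) * (ρ/2)^(n1+α) * u ρ ^ p ≤ G s := by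
        intro s hs
        have hs0 : 0 < s := by linarith [hs.1]
        have hKs : k0/2 * s ^ α ≤ K s := hKδ s hs0 (by linarith [hs.2])
        have hus : u ρ ≤ u s := hanti (hsubA hs) hρmem hs.2
        have hupow : u ρ ^ p ≤ u s ^ p :=
          Real.rpow_le_rpow (hpos ρ hρmem).le hus (by linarith)
        have h1 : (k0/2) * s^α * u ρ ^ p ≤ K s * u s ^ p :=
          mul_le_mul hKs hupow (Real.rpow_nonneg (hpos ρ hρmem).le _) (Kpos s hs0).le
        have hpows : (ρ/2)^(n1+α) ≤ s^(n1+α) :=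
          Real.rpow_le_rpow (by linarith) hs.1 hn1α
        have hsadd : s^(n1+α) = s^n1 * s^α := Real.rpow_add hs0 _ _
        have hsn : (0:ℝ) < s ^ n1 := Real.rpow_pos_of_pos hs0 _
        have hμf : 0 ≤ μ * f s := mul_nonneg hμ (hfnn s hs0)
        calc (k0/2) * (ρ/2)^(n1+α) * u ρ ^ p
            ≤ (k0/2) * s^(n1+α) * u ρ ^ p :=
              mul_le_mul_of_nonneg_right (mul_le_mul_of_nonneg_left hpows (by linarith))
                (Real.rpow_nonneg (hpos ρ hρmem).le _)
          _ = s^n1 * ((k0/2) * s^α * u ρ ^ p) := by rw [hsadd]; ring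
          _ ≤ s^n1 * (K s * u s ^ p + μ * f s) := by
              apply mul_le_mul_of_nonneg_left _ hsn.le
              linarith
          _ = G s := rfl
      have hA : (ρ/2) * ((k0/2) * (ρ/2)^(n1+α) * u ρ ^ p) ≤ F ρ := by
        have hle : ∫ _s in (ρ/2)..ρ, ((k0/2) * (ρ/2)^(n1+α) * u ρ ^ p)
            ≤ ∫ s in (ρ/2)..ρ, G s :=
          intervalIntegral.integral_mono_on (by linarith) intervalIntegrable_const
            (ContinuousOn.intervalIntegrable (by rwa [uIcc_of_le (by linarith)])) hptA
        rw [intervalIntegral.integral_const, smul_eq_mul, hFTCA] at hle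
        have hF2 := hFnonneg (ρ/2) hhmem
        have he : ρ - ρ/2 = ρ/2 := by ring
        rw [he] at hle
        linarith
      -- Step B
      have hsubB : Icc ρ (2*ρ) ⊆ Ioo (0:ℝ) r1 := fun s hs =>
        ⟨by linarith [hs.1], by linarith [hs.2]⟩
      have hFTCB : ∫ s in ρ..(2*ρ), deriv u s = u (2*ρ) - u ρ := by
        apply intervalIntegral.integral_eq_sub_of_hasDerivAt
        · intro s hs
          rw [uIcc_of_le (by linarith)] at hs
          exact hd1 s (hsubB hs)
        · apply ContinuousOn.intervalIntegrable
          rw [uIcc_of_le (by linarith)]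
          exact hcd1.continuousOn.mono hsubB
      have h2ρn : (0:ℝ) < (2*ρ)^n1 := Real.rpow_pos_of_pos (by linarith) _
      have hptB : ∀ s ∈ Icc ρ (2*ρ), F ρ / (2*ρ)^n1 ≤ -(deriv u s) := by
        intro s hs
        have hs0 : 0 < s := by linarith [hs.1]
        have hsmem := hsubB hs
        have hsn : (0:ℝ) < s ^ n1 := Real.rpow_pos_of_pos hs0 _
        have hFs : F ρ ≤ F s := hFmono hρmem hsmem hs.1
        have hFsn : 0 ≤ F s := hFnonneg s hsmem
        have hpowle : s ^ n1 ≤ (2*ρ)^n1 := Real.rpow_le_rpow hs0.le hs.2 hn1pos.le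
        have hdiv : F ρ / (2*ρ)^n1 ≤ F s / s^n1 := div_le_div₀ hFsn hFs hsn hpowle
        have he : F s / s^n1 = -(deriv u s) := by
          simp only [hFdef]
          field_simp
        rwa [he] at hdiv
      have hB : ρ * (F ρ / (2*ρ)^n1) ≤ u ρ - u (2*ρ) := by
        have hle : ∫ _s in ρ..(2*ρ), (F ρ / (2*ρ)^n1) ≤ ∫ s in ρ..(2*ρ), -(deriv u s) := by
          apply intervalIntegral.integral_mono_on (by linarith) intervalIntegrable_const _ hptB
          apply ContinuousOn.intervalIntegrable
          rw [uIcc_of_le (by linarith)]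
          exact (hcd1.continuousOn.mono hsubB).neg
        rw [intervalIntegral.integral_const, smul_eq_mul, intervalIntegral.integral_neg,
          hFTCB] at hle
        have he : 2*ρ - ρ = ρ := by ring
        rw [he] at hle
        linarith
      -- combine
      have hu2ρ : 0 < u (2*ρ) := hpos _ h2ρmem
      have hcomb : ρ * ((ρ/2) * ((k0/2) * (ρ/2)^(n1+α) * u ρ ^ p) / (2*ρ)^n1) ≤ u ρ := by
        have h1 : (ρ/2) * ((k0/2) * (ρ/2)^(n1+α) * u ρ ^ p) / (2*ρ)^n1 ≤ F ρ / (2*ρ)^n1 :=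
          (div_le_div_iff_of_pos_right h2ρn).mpr hA
        have h2 := mul_le_mul_of_nonneg_left h1 hρ.le
        linarith
      rw [alg_aux n1 α ρ (u ρ ^ p) k0 hρ, ← hcdef] at hcomb
      exact hcomb
    -- conclude
    refine ⟨r0, hr0pos, le_trans (min_le_left _ _) (by linarith),
      (c⁻¹) ^ (1/(p-1)), Real.rpow_pos_of_pos (inv_pos.mpr hcpos) _, ?_⟩
    intro ρ hρ hρlt
    have hρmem : ρ ∈ Ioo (0:ℝ) r1 := by
      have := hρlt.trans_le (min_le_left _ _); exact ⟨hρ, by linarith⟩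
    have hup : 0 < u ρ := hpos ρ hρmem
    have hkey := key ρ hρ hρlt
    have hρ2α : (0:ℝ) < ρ ^ ((2:ℝ)+α) := Real.rpow_pos_of_pos hρ _
    have hupow : u ρ ^ p = u ρ ^ (p-1) * u ρ := by
      rw [← Real.rpow_add_one hup.ne' (p-1)]
      norm_num
    have h1 : (c * ρ^((2:ℝ)+α) * u ρ^(p-1)) * u ρ ≤ 1 * u ρ := by
      rw [one_mul]
      calc (c * ρ^((2:ℝ)+α) * u ρ^(p-1)) * u ρ = c * ρ^((2:ℝ)+α) * u ρ ^ p := by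
            rw [hupow]; ring
        _ ≤ u ρ := hkey
    have h2 : c * ρ^((2:ℝ)+α) * u ρ^(p-1) ≤ 1 := le_of_mul_le_mul_right h1 hup
    have hmulpos : 0 < c * ρ^((2:ℝ)+α) := mul_pos hcpos hρ2α
    have h3 : u ρ ^ (p-1) ≤ (c * ρ^((2:ℝ)+α))⁻¹ := by
      rw [← one_div, le_div_iff₀ hmulpos]
      calc u ρ^(p-1) * (c * ρ^((2:ℝ)+α)) = c * ρ^((2:ℝ)+α) * u ρ^(p-1) := by ring
        _ ≤ 1 := h2
    have h4 : u ρ ≤ ((c * ρ^((2:ℝ)+α))⁻¹) ^ (1/(p-1)) := by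
      have h5 := Real.rpow_le_rpow (Real.rpow_nonneg hup.le _) h3
        (by positivity : (0:ℝ) ≤ 1/(p-1))
      have e : (u ρ ^ (p-1)) ^ (1/(p-1)) = u ρ := by
        rw [← Real.rpow_mul hup.le, mul_one_div, div_self hp0.ne', Real.rpow_one]
      rwa [e] at h5
    have e6 : ((c * ρ^((2:ℝ)+α))⁻¹) ^ (1/(p-1))
        = c⁻¹ ^ (1/(p-1)) * ρ ^ (-(θconst p α)) := by
      rw [mul_inv, ← Real.rpow_neg hρ.le,
        Real.mul_rpow (inv_nonneg.mpr hcpos.le) (Real.rpow_nonneg hρ.le _),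
        ← Real.rpow_mul hρ.le]
      congr 2
      show (-((2:ℝ)+α)) * (1/(p-1)) = -θconst p α
      rw [θconst]
      ring
    rw [e6] at h4
    calc ρ ^ θconst p α * u ρ
        ≤ ρ ^ θconst p α * (c⁻¹ ^ (1/(p-1)) * ρ ^ (-(θconst p α))) :=
          mul_le_mul_of_nonneg_left h4 (Real.rpow_nonneg hρ.le _)
      _ = c⁻¹ ^ (1/(p-1)) * (ρ ^ θconst p α * ρ ^ (-(θconst p α))) := by ring
      _ = c⁻¹ ^ (1/(p-1)) := by
          rw [← Real.rpow_add hρ, add_neg_cancel, Real.rpow_zero, mul_one]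
end
end

section
/- Let N ≥ 3 and p > 1. Assume condition (K0), condition (f0), μ ≥ 0, and θ < N - 2 (which holds in particular when p > p_S(α)). Let u ∈ C²((0,r_1)) be a positive solution of u'' + ((N-1)/r)u' + K(r)u^p + μ f(r) = 0 on (0, r_1) for some r_1 > 0 with lim_{r→0+} u(r) = ∞. Then limsup_{r→0+} r^θ u(r) > 0. -/
open Real Filter Set MeasureTheory Topology

noncomputable section

lemma stmt7aux_add_rpow_le (x y q : ℝ) (hx : 0 ≤ x) (hy : 0 ≤ y) (hq : 0 ≤ q) :
    (x + y) ^ q ≤ 2 ^ q * (x ^ q + y ^ q) := by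
  have hmax : x + y ≤ 2 * max x y := by
    rcases le_total x y with h | h
    · rw [max_eq_right h]; linarith
    · rw [max_eq_left h]; linarith
  have h0 : (0:ℝ) ≤ max x y := le_trans hx (le_max_left _ _)
  calc (x + y) ^ q ≤ (2 * max x y) ^ q :=
        Real.rpow_le_rpow (by linarith) hmax hq
    _ = 2 ^ q * (max x y) ^ q := Real.mul_rpow (by norm_num) h0
    _ ≤ 2 ^ q * (x ^ q + y ^ q) := by
        apply mul_le_mul_of_nonneg_left _ (Real.rpow_nonneg (by norm_num) q)
        rcases le_total x y with h | h
        · rw [max_eq_right h]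
          have := Real.rpow_nonneg hx q; linarith
        · rw [max_eq_left h]
          have := Real.rpow_nonneg hy q; linarith

lemma stmt7aux_rpow_tendsto_zero (e : ℝ) (he : 0 < e) :
    Tendsto (fun s : ℝ => s ^ e) (𝓝[>] 0) (𝓝 0) := by
  have hc := (Real.continuousAt_rpow_const 0 e (Or.inr he.le)).tendsto
  rw [Real.zero_rpow he.ne'] at hc
  exact hc.mono_left nhdsWithin_le_nhds

lemma stmt7aux_rpow_neg_tendsto_atTop (e : ℝ) (he : e < 0) :
    Tendsto (fun r : ℝ => r ^ e) (𝓝[>] 0) atTop := by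
  have h := (tendsto_rpow_atTop (neg_pos.2 he)).comp tendsto_inv_nhdsGT_zero
  apply h.congr'
  filter_upwards [self_mem_nhdsWithin] with r hr
  have hr0 : (0:ℝ) < r := hr
  show r⁻¹ ^ (-e) = r ^ e
  rw [Real.inv_rpow hr0.le, ← Real.rpow_neg hr0.le, neg_neg]

set_option maxHeartbeats 2000000 in
/-- Lemma 2.1 (ii): for a singular solution,
`limsup_{r→0+} r^θ u(r) > 0`. -/
theorem stmt7 (N : ℕ) (p μ α k0 r1 : ℝ) (K f u : ℝ → ℝ)
    (hN : 3 ≤ N) (hp1 : 1 < p) (hμ : 0 ≤ μ)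
    (hK : CondK0 K α k0) (hf : CondF0 f)
    (hθ : θconst p α < (N : ℝ) - 2)
    (hr1 : 0 < r1)
    (hu : SolOn N p μ K f u (Ioo 0 r1))
    (hsing : Tendsto u (𝓝[>] 0) atTop) :
    ∃ c : ℝ, 0 < c ∧ ∃ᶠ r in 𝓝[>] (0 : ℝ), c < r ^ θconst p α * u r := by
  obtain ⟨hucd, hupos, hueq⟩ := hu
  obtain ⟨hKpos, hKcont, hα, hk0, hKlim⟩ := hK
  obtain ⟨hfcont, hfnn, -, ν, hν, C, hC, ρ0, hρ0, hfbd⟩ := hf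
  set θ : ℝ := θconst p α with hθdef
  have hθval : θ = (2 + α) / (p - 1) := by rw [hθdef, θconst]
  have hNr : (3:ℝ) ≤ (N:ℝ) := by exact_mod_cast hN
  have hp' : (0:ℝ) < p - 1 := by linarith
  have hp0 : (0:ℝ) ≤ p := by linarith
  have h2α : (0:ℝ) < 2 + α := by linarith
  have hθpos : 0 < θ := by rw [hθval]; positivity
  have hθmul : θ * (p - 1) = 2 + α := by
    rw [hθval]; field_simp
  have hθp : θ * p = θ + (2 + α) := by linear_combination hθmul
  have hNα : (0:ℝ) < (N:ℝ) + α := by linarith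
  have hNθ : (0:ℝ) < (N:ℝ) - 2 - θ := by linarith
  have hNν : (0:ℝ) < (N:ℝ) + ν := by linarith
  have h2ν : (0:ℝ) < 2 + ν := by linarith
  by_contra hcon
  push_neg at hcon
  have hsmall : ∀ c : ℝ, 0 < c → ∀ᶠ r in 𝓝[>] (0:ℝ), r ^ θ * u r ≤ c := by
    intro c hc
    have h := hcon c hc
    exact h
  -- differentiability
  have hcd1 : ContDiffOn ℝ 1 (deriv u) (Ioo 0 r1) :=
    hucd.deriv_of_isOpen isOpen_Ioo (by norm_num)
  have hcontu : ContinuousOn u (Ioo 0 r1) := hucd.continuousOn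
  have hcontu' : ContinuousOn (deriv u) (Ioo 0 r1) := hcd1.continuousOn
  have hdiffu : ∀ t ∈ Ioo (0:ℝ) r1, HasDerivAt u (deriv u t) t := by
    intro t ht
    exact ((hucd.differentiableOn (by norm_num)).differentiableAt
      (isOpen_Ioo.mem_nhds ht)).hasDerivAt
  have hdiffu' : ∀ t ∈ Ioo (0:ℝ) r1, HasDerivAt (deriv u) (deriv (deriv u) t) t := by
    intro t ht
    exact ((hcd1.differentiableOn (by norm_num)).differentiableAt
      (isOpen_Ioo.mem_nhds ht)).hasDerivAt
  set w : ℝ → ℝ := fun t => t ^ ((N:ℝ) - 1) * deriv u t with hwdef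
  set g : ℝ → ℝ := fun t => t ^ ((N:ℝ) - 1) * (K t * u t ^ p + μ * f t) with hgdef
  have hposIcc : ∀ x y τ : ℝ, 0 < x → 0 < y → τ ∈ Set.uIcc x y → 0 < τ := by
    intro x y τ hx hy hτ
    exact lt_of_lt_of_le (lt_min hx hy) hτ.1
  have hconrpow : ∀ (e x y : ℝ), 0 < x → 0 < y →
      ContinuousOn (fun τ : ℝ => τ ^ e) (Set.uIcc x y) := by
    intro e x y hx hy
    apply ContinuousOn.rpow_const continuousOn_id
    intro τ hτ
    exact Or.inl (hposIcc x y τ hx hy hτ).ne'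
  have hgcont : ContinuousOn g (Ioo 0 r1) := by
    apply ContinuousOn.mul
    · exact continuousOn_id.rpow_const fun t ht => Or.inl ht.1.ne'
    · apply ContinuousOn.add
      · exact (hKcont.mono fun t ht => ht.1).mul
          (hcontu.rpow_const fun t ht => Or.inl (hupos t ht).ne')
      · exact continuousOn_const.mul (hfcont.mono fun t ht => ht.1)
  have hwcont : ContinuousOn w (Ioo 0 r1) :=
    (continuousOn_id.rpow_const fun t ht => Or.inl ht.1.ne').mul hcontu'
  have hgnn : ∀ t ∈ Ioo (0:ℝ) r1, 0 ≤ g t := by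
    intro t ht
    apply mul_nonneg (Real.rpow_nonneg ht.1.le _)
    have h1 := (hKpos t ht.1).le
    have h2 := Real.rpow_nonneg (hupos t ht).le p
    have h3 := hfnn t ht.1
    positivity
  have hwder : ∀ t ∈ Ioo (0:ℝ) r1, HasDerivAt w (-(g t)) t := by
    intro t ht
    have ht0 : (0:ℝ) < t := ht.1
    have h1 : HasDerivAt (fun s : ℝ => s ^ ((N:ℝ) - 1))
        (((N:ℝ) - 1) * t ^ ((N:ℝ) - 1 - 1)) t :=
      Real.hasDerivAt_rpow_const (Or.inl ht0.ne')
    have h2 := h1.mul (hdiffu' t ht)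
    have heq := hueq t ht
    refine h2.congr_deriv ?_
    have h3 : deriv (deriv u) t
        = -(((N:ℝ) - 1) / t * deriv u t + (K t * u t ^ p + μ * f t)) := by linarith
    rw [hgdef, h3, Real.rpow_sub ht0, Real.rpow_one]
    field_simp
    ring
  have hFTCw : ∀ a b : ℝ, 0 < a → a ≤ b → b < r1 →
      w b - w a = -∫ t in a..b, g t := by
    intro a b ha hab hb
    have hsub : Set.uIcc a b ⊆ Ioo 0 r1 := by
      rw [Set.uIcc_of_le hab]
      exact fun t ht => ⟨lt_of_lt_of_le ha ht.1, lt_of_le_of_lt ht.2 hb⟩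
    have h := intervalIntegral.integral_eq_sub_of_hasDerivAt
      (f := w) (f' := fun t => -(g t)) (fun t ht => hwder t (hsub ht))
      ((hgcont.mono hsub).neg.intervalIntegrable)
    rw [intervalIntegral.integral_neg] at h
    linarith
  have hFTCu : ∀ a b : ℝ, 0 < a → a ≤ b → b < r1 →
      u b - u a = ∫ t in a..b, t ^ (1 - (N:ℝ)) * w t := by
    intro a b ha hab hb
    have hsub : Set.uIcc a b ⊆ Ioo 0 r1 := by
      rw [Set.uIcc_of_le hab]
      exact fun t ht => ⟨lt_of_lt_of_le ha ht.1, lt_of_le_of_lt ht.2 hb⟩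
    have h := intervalIntegral.integral_eq_sub_of_hasDerivAt
      (a := a) (b := b) (f := u) (f' := fun t => t ^ (1 - (N:ℝ)) * w t) ?_ ?_
    · rw [h]
    · intro t ht
      have ht' := hsub ht
      have ht0 : (0:ℝ) < t := ht'.1
      have he : t ^ (1 - (N:ℝ)) * w t = deriv u t := by
        rw [hwdef]
        show t ^ (1 - (N:ℝ)) * (t ^ ((N:ℝ) - 1) * deriv u t) = deriv u t
        rw [← mul_assoc, ← Real.rpow_add ht0]
        norm_num
      show HasDerivAt u (t ^ (1 - (N:ℝ)) * w t) t
      rw [he]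
      exact hdiffu t ht'
    · apply ContinuousOn.intervalIntegrable
      exact (hconrpow _ a b ha (lt_of_lt_of_le ha hab)).mul (hwcont.mono hsub)
  have hwmono : ∀ a b : ℝ, 0 < a → a ≤ b → b < r1 → w b ≤ w a := by
    intro a b ha hab hb
    have h := hFTCw a b ha hab hb
    have h0 : 0 ≤ ∫ t in a..b, g t := by
      apply intervalIntegral.integral_nonneg hab
      intro t ht
      exact hgnn t ⟨lt_of_lt_of_le ha ht.1, lt_of_le_of_lt ht.2 hb⟩
    linarith
  -- bounds on K and f near zero
  have hKev : ∀ᶠ t in 𝓝[>] (0:ℝ), K t ≤ 2 * k0 * t ^ α := by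
    have h1 : ∀ᶠ t in 𝓝[>] (0:ℝ), t ^ (-α) * K t < 2 * k0 :=
      hKlim.eventually_lt_const (by linarith)
    filter_upwards [h1, self_mem_nhdsWithin] with t ht ht0
    have ht0' : (0:ℝ) < t := ht0
    have h2 : t ^ α * (t ^ (-α) * K t) ≤ t ^ α * (2 * k0) :=
      mul_le_mul_of_nonneg_left ht.le (Real.rpow_nonneg ht0'.le α)
    rw [← mul_assoc, ← Real.rpow_add ht0', show α + -α = 0 by ring, Real.rpow_zero,
      one_mul] at h2
    calc K t ≤ t ^ α * (2 * k0) := h2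
      _ = 2 * k0 * t ^ α := by ring
  obtain ⟨sK, hsK, hsubK⟩ := mem_nhdsGT_iff_exists_Ioc_subset.1 hKev
  have hsK0 : (0:ℝ) < sK := hsK
  set s0 : ℝ := min sK (min ρ0 r1) / 2 with hs0def
  have hs0pos : 0 < s0 := by
    have h := lt_min hsK0 (lt_min hρ0 hr1)
    rw [hs0def]; linarith
  have hs0r1 : s0 < r1 := by
    have h1 : min sK (min ρ0 r1) ≤ r1 := le_trans (min_le_right _ _) (min_le_right _ _)
    rw [hs0def]; linarith
  have hs0K : ∀ t ∈ Ioc (0:ℝ) s0, K t ≤ 2 * k0 * t ^ α := by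
    intro t ht
    apply hsubK
    constructor
    · exact ht.1
    · have h1 : min sK (min ρ0 r1) ≤ sK := min_le_left _ _
      have := ht.2; rw [hs0def] at this; linarith [hs0pos]
  have hs0f : ∀ t ∈ Ioc (0:ℝ) s0, f t ≤ C * t ^ ν := by
    intro t ht
    apply hfbd t ht.1
    have h1 : min sK (min ρ0 r1) ≤ ρ0 := le_trans (min_le_right _ _) (min_le_left _ _)
    have := ht.2; rw [hs0def] at this; linarith [hρ0]
  have hN2 : ((N:ℝ) - 2) ≠ 0 := by linarith
  -- CASE 1 : w is nonnegative somewhere near 0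
  by_cases hcase1 : ∃ s ∈ Ioc (0:ℝ) s0, 0 ≤ w s
  · obtain ⟨s, hs, hws⟩ := hcase1
    have hsr1 : s < r1 := lt_of_le_of_lt hs.2 hs0r1
    have hub : ∀ t ∈ Ioc (0:ℝ) s, u t ≤ u s := by
      intro t ht
      have h := hFTCu t s ht.1 ht.2 hsr1
      have h0 : 0 ≤ ∫ τ in t..s, τ ^ (1 - (N:ℝ)) * w τ := by
        apply intervalIntegral.integral_nonneg ht.2
        intro τ hτ
        have hτ0 : 0 < τ := lt_of_lt_of_le ht.1 hτ.1
        have hwτ : 0 ≤ w τ := le_trans hws (hwmono τ s hτ0 hτ.2 hsr1)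
        exact mul_nonneg (Real.rpow_nonneg hτ0.le _) hwτ
      linarith
    have hev1 : ∀ᶠ r in 𝓝[>] (0:ℝ), u s < u r :=
      hsing.eventually (eventually_gt_atTop (u s))
    have hev2 : ∀ᶠ r in 𝓝[>] (0:ℝ), r ∈ Ioc (0:ℝ) s :=
      eventually_mem_set.2 (Ioc_mem_nhdsGT_of_mem ⟨le_refl (0:ℝ), hs.1⟩)
    obtain ⟨r, hra, hrb⟩ := (hev1.and hev2).exists
    exact absurd (hub r hrb) (not_le.2 hra)
  -- CASE 2 : w < 0 near 0
  by_cases hcase2 : ∃ ε : ℝ, 0 < ε ∧ ∀ t ∈ Ioc (0:ℝ) s0, w t ≤ -ε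
  · -- CASE 2a : w bounded away from 0 : u blows up like r^{2-N}
    obtain ⟨ε, hε, hwneg⟩ := hcase2
    set κ : ℝ := ε / ((N:ℝ) - 2) with hκdef
    have hκ : 0 < κ := by rw [hκdef]; apply div_pos hε; linarith
    set c2 : ℝ := u s0 - κ * s0 ^ (2 - (N:ℝ)) with hc2def
    have hlow : ∀ r ∈ Ioc (0:ℝ) s0, c2 + κ * r ^ (2 - (N:ℝ)) ≤ u r := by
      intro r hr
      have h := hFTCu r s0 hr.1 hr.2 hs0r1
      have hmono : ∫ t in r..s0, t ^ (1-(N:ℝ)) * w t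
          ≤ ∫ t in r..s0, t ^ (1-(N:ℝ)) * (-ε) := by
        apply intervalIntegral.integral_mono_on hr.2
        · apply ContinuousOn.intervalIntegrable
          apply (hconrpow _ r s0 hr.1 hs0pos).mul
          apply hwcont.mono
          rw [Set.uIcc_of_le hr.2]
          intro t ht; exact ⟨lt_of_lt_of_le hr.1 ht.1, lt_of_le_of_lt ht.2 hs0r1⟩
        · exact ((hconrpow _ r s0 hr.1 hs0pos).mul continuousOn_const).intervalIntegrable
        · intro t ht
          have ht0 : 0 < t := lt_of_lt_of_le hr.1 ht.1
          exact mul_le_mul_of_nonneg_left (hwneg t ⟨ht0, ht.2⟩)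
            (Real.rpow_nonneg ht0.le _)
      have hcomp : ∫ t in r..s0, t ^ (1-(N:ℝ)) * (-ε)
          = ((s0 ^ (2-(N:ℝ)) - r ^ (2-(N:ℝ))) / (2-(N:ℝ))) * (-ε) := by
        rw [intervalIntegral.integral_mul_const, integral_rpow
          (Or.inr ⟨by intro hcontra; exact hN2 (by linarith),
            Set.notMem_uIcc_of_lt hr.1 hs0pos⟩)]
        rw [show (1-(N:ℝ)) + 1 = 2 - (N:ℝ) by ring]
      have key : ∀ x y : ℝ, (x - y)/(2-(N:ℝ)) * (-ε)
          = ε/((N:ℝ)-2) * x - ε/((N:ℝ)-2) * y := by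
        intro x y
        have h2N : (2 - (N:ℝ)) ≠ 0 := by intro hc; exact hN2 (by linarith)
        field_simp
        ring
      have hJ : ∫ t in r..s0, t ^ (1-(N:ℝ)) * (-ε)
          = κ * s0 ^ (2 - (N:ℝ)) - κ * r ^ (2-(N:ℝ)) := by
        rw [hcomp, hκdef]; exact key _ _
      linarith [h, hmono, hJ, hc2def]
    have hev1 := hsmall 1 one_pos
    have hev2 : ∀ᶠ r in 𝓝[>] (0:ℝ), r ∈ Ioc (0:ℝ) s0 :=
      eventually_mem_set.2 (Ioc_mem_nhdsGT_of_mem ⟨le_refl (0:ℝ), hs0pos⟩)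
    have hev3 : ∀ᶠ r in 𝓝[>] (0:ℝ), 1 + s0 ^ θ * |c2| < κ * r ^ (θ + 2 - (N:ℝ)) := by
      have h := (stmt7aux_rpow_neg_tendsto_atTop (θ + 2 - (N:ℝ)) (by linarith)).const_mul_atTop hκ
      exact h.eventually (eventually_gt_atTop _)
    obtain ⟨r, hra, hrb, hrc⟩ := (hev1.and (hev2.and hev3)).exists
    have hr0 : 0 < r := hrb.1
    have h1 : c2 + κ * r ^ (2-(N:ℝ)) ≤ u r := hlow r hrb
    have h2 : r ^ θ * (c2 + κ * r ^ (2-(N:ℝ))) ≤ r ^ θ * u r :=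
      mul_le_mul_of_nonneg_left h1 (Real.rpow_nonneg hr0.le θ)
    have h3 : r ^ θ * (c2 + κ * r ^ (2-(N:ℝ)))
        = r ^ θ * c2 + κ * r ^ (θ + 2 - (N:ℝ)) := by
      rw [show θ + 2 - (N:ℝ) = θ + (2 - (N:ℝ)) by ring, Real.rpow_add hr0]; ring
    have hrθ : r ^ θ ≤ s0 ^ θ := Real.rpow_le_rpow hr0.le hrb.2 hθpos.le
    have h4a : r ^ θ * -|c2| ≤ r ^ θ * c2 :=
      mul_le_mul_of_nonneg_left (neg_abs_le c2) (Real.rpow_nonneg hr0.le θ)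
    have h4b : r ^ θ * |c2| ≤ s0 ^ θ * |c2| :=
      mul_le_mul_of_nonneg_right hrθ (abs_nonneg c2)
    rw [mul_neg] at h4a
    linarith
  -- CASE 2b : w tends to 0 along a sequence; bootstrap argument
  push_neg at hcase2
  have h2' : ∀ ε : ℝ, 0 < ε → ∀ t1, t1 ∈ Ioc (0:ℝ) s0 →
      ∃ t', t' ∈ Ioc (0:ℝ) t1 ∧ -(w t') ≤ ε := by
    intro ε hε t1 ht1
    obtain ⟨t, ht, hwt⟩ := hcase2 ε hε
    refine ⟨min t t1, ⟨lt_min ht.1 ht1.1, min_le_right _ _⟩, ?_⟩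
    have h := hwmono (min t t1) t (lt_min ht.1 ht1.1) (min_le_left _ _)
      (lt_of_le_of_lt ht.2 hs0r1)
    linarith
  set c1 : ℝ := 2 * k0 * 2 ^ p with hc1def
  have hc1 : 0 < c1 := by
    rw [hc1def]
    have := Real.rpow_pos_of_pos (show (0:ℝ) < 2 by norm_num) p
    positivity
  set B : ℝ := c1 / (((N:ℝ) - 2 - θ) * θ) with hBdef
  have hB : 0 < B := div_pos hc1 (mul_pos hNθ hθpos)
  set Cc2 : ℝ := c1 * 2 ^ p / (((N:ℝ) + α) * (2 + α)) with hCc2def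
  have hCc2 : 0 < Cc2 :=
    div_pos (mul_pos hc1 (Real.rpow_pos_of_pos (by norm_num) p)) (mul_pos hNα h2α)
  set K2 : ℝ := Cc2 * 2 ^ (p - 1) with hK2def
  have hK2 : 0 < K2 := mul_pos hCc2 (Real.rpow_pos_of_pos (by norm_num) _)
  -- choose c
  have hcev : ∀ᶠ c in 𝓝[>] (0:ℝ), B * c ^ (p-1) ≤ 1/2 ∧ K2 * c ^ (p-1) ≤ 1/2 := by
    have h0 := stmt7aux_rpow_tendsto_zero (p-1) hp'
    have h1 : Tendsto (fun c : ℝ => B * c ^ (p-1)) (𝓝[>] 0) (𝓝 0) := by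
      have := h0.const_mul B; simpa using this
    have h2 : Tendsto (fun c : ℝ => K2 * c ^ (p-1)) (𝓝[>] 0) (𝓝 0) := by
      have := h0.const_mul K2; simpa using this
    filter_upwards [h1.eventually_lt_const (show (0:ℝ) < 1/2 by norm_num),
      h2.eventually_lt_const (show (0:ℝ) < 1/2 by norm_num)] with x hx1 hx2
    exact ⟨hx1.le, hx2.le⟩
  obtain ⟨c, ⟨hcB, hcK⟩, hcmem⟩ := (hcev.and self_mem_nhdsWithin).exists
  have hc : (0:ℝ) < c := hcmem
  obtain ⟨s1, hs1mem, hs1sub⟩ := mem_nhdsGT_iff_exists_Ioc_subset.1 (hsmall c hc)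
  have hs10 : (0:ℝ) < s1 := hs1mem
  -- choose s
  have hsev : ∀ᶠ x in 𝓝[>] (0:ℝ),
      μ * C / (((N:ℝ)+ν)*(2+ν)) * x ^ (θ + 2 + ν) ≤ c := by
    have h0 := stmt7aux_rpow_tendsto_zero (θ + 2 + ν) (by linarith)
    have h1 : Tendsto (fun x : ℝ => μ * C / (((N:ℝ)+ν)*(2+ν)) * x ^ (θ+2+ν))
        (𝓝[>] 0) (𝓝 0) := by
      have := h0.const_mul (μ * C / (((N:ℝ)+ν)*(2+ν))); simpa using this
    exact (h1.eventually_lt_const hc).mono fun x hx => hx.le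
  obtain ⟨s, hsmem, hsbd⟩ := ((eventually_mem_set.2
    (Ioc_mem_nhdsGT_of_mem ⟨le_refl (0:ℝ), lt_min hs0pos hs10⟩)).and hsev).exists
  have hs0' : 0 < s := hsmem.1
  have hss0 : s ≤ s0 := le_trans hsmem.2 (min_le_left _ _)
  have hss1 : s ≤ s1 := le_trans hsmem.2 (min_le_right _ _)
  have hsr1' : s < r1 := lt_of_le_of_lt hss0 hs0r1
  have hsIoo : s ∈ Ioo (0:ℝ) r1 := ⟨hs0', hsr1'⟩
  set A1 : ℝ := c1 * s ^ (2+α) / (((N:ℝ)+α)*(2+α)) with hA1def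
  set A2 : ℝ := μ * C * s ^ (2+ν) / (((N:ℝ)+ν)*(2+ν)) with hA2def
  have hA1 : 0 ≤ A1 := by
    rw [hA1def]
    exact div_nonneg (mul_nonneg hc1.le (Real.rpow_nonneg hs0'.le _))
      (mul_pos hNα h2α).le
  have hA2 : 0 ≤ A2 := by
    rw [hA2def]
    exact div_nonneg (mul_nonneg (mul_nonneg hμ hC.le) (Real.rpow_nonneg hs0'.le _))
      (mul_pos hNν h2ν).le
  set D : ℝ := u s + A2 with hDdef
  have hD : 0 < D := by
    have := hupos s hsIoo
    rw [hDdef]; linarith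
  have hbase : ∀ t ∈ Ioc (0:ℝ) s, u t ≤ c * t ^ (-θ) := by
    intro t ht
    have ht0 : 0 < t := ht.1
    have h : t ^ θ * u t ≤ c := hs1sub ⟨ht.1, le_trans ht.2 hss1⟩
    have hmul : t ^ (-θ) * (t ^ θ * u t) ≤ t ^ (-θ) * c :=
      mul_le_mul_of_nonneg_left h (Real.rpow_nonneg ht0.le _)
    rw [← mul_assoc, ← Real.rpow_add ht0, show -θ + θ = 0 by ring, Real.rpow_zero,
      one_mul] at hmul
    calc u t ≤ t ^ (-θ) * c := hmul
      _ = c * t ^ (-θ) := mul_comm _ _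
  have hsθD : s ^ θ * D ≤ 2 * c := by
    have h1 : s ^ θ * u s ≤ c := hs1sub ⟨hs0', hss1⟩
    have h2 : s ^ θ * A2 ≤ c := by
      have e : s ^ (θ+2+ν) = s^θ * s^(2+ν) := by
        rw [show θ + 2 + ν = θ + (2+ν) by ring]
        exact Real.rpow_add hs0' _ _
      have he : s ^ θ * A2 = μ * C / (((N:ℝ)+ν)*(2+ν)) * s ^ (θ+2+ν) := by
        rw [hA2def, e]; ring
      rw [he]; exact hsbd
    rw [hDdef, mul_add]; linarith
  -- the bootstrap step
  have hstep : ∀ a b : ℝ, 0 ≤ a → 0 ≤ b →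
      (∀ t ∈ Ioc (0:ℝ) s, u t ≤ a + b * t ^ (-θ)) →
      ∀ r ∈ Ioc (0:ℝ) s, u r ≤ (u s + A1 * a ^ p + A2) + B * b ^ p * r ^ (-θ) := by
    intro a b ha hb hub
    set G : ℝ → ℝ := fun t => c1 * a^p * t ^ ((N:ℝ)+α) / ((N:ℝ)+α)
        + c1 * b^p * t ^ ((N:ℝ)-2-θ) / ((N:ℝ)-2-θ)
        + μ * C * t ^ ((N:ℝ)+ν) / ((N:ℝ)+ν) with hGdef
    have hGnn : ∀ t : ℝ, 0 < t → 0 ≤ G t := by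
      intro t ht
      have g1 : 0 ≤ c1 * a^p * t ^ ((N:ℝ)+α) / ((N:ℝ)+α) :=
        div_nonneg (mul_nonneg (mul_nonneg hc1.le (Real.rpow_nonneg ha p))
          (Real.rpow_nonneg ht.le _)) hNα.le
      have g2 : 0 ≤ c1 * b^p * t ^ ((N:ℝ)-2-θ) / ((N:ℝ)-2-θ) :=
        div_nonneg (mul_nonneg (mul_nonneg hc1.le (Real.rpow_nonneg hb p))
          (Real.rpow_nonneg ht.le _)) hNθ.le
      have g3 : 0 ≤ μ * C * t ^ ((N:ℝ)+ν) / ((N:ℝ)+ν) :=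
        div_nonneg (mul_nonneg (mul_nonneg hμ hC.le)
          (Real.rpow_nonneg ht.le _)) hNν.le
      simp only [hGdef]
      linarith
    have hGcont : ∀ x y : ℝ, 0 < x → 0 < y → ContinuousOn G (Set.uIcc x y) := by
      intro x y hx hy
      simp only [hGdef]
      exact (((continuousOn_const.mul (hconrpow _ x y hx hy)).div_const _).add
        ((continuousOn_const.mul (hconrpow _ x y hx hy)).div_const _)).add
        ((continuousOn_const.mul (hconrpow _ x y hx hy)).div_const _)
    have hgbd : ∀ τ ∈ Ioc (0:ℝ) s, g τ ≤ c1 * a^p * τ ^ ((N:ℝ)-1+α)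
        + c1 * b^p * τ ^ ((N:ℝ)-3-θ) + μ * C * τ ^ ((N:ℝ)-1+ν) := by
      intro τ hτ
      have hτ0 : 0 < τ := hτ.1
      have hτIoo : τ ∈ Ioo (0:ℝ) r1 := ⟨hτ0, lt_of_le_of_lt (le_trans hτ.2 hss0) hs0r1⟩
      have hτs0 : τ ∈ Ioc (0:ℝ) s0 := ⟨hτ0, le_trans hτ.2 hss0⟩
      have hKb := hs0K τ hτs0
      have hfb := hs0f τ hτs0
      have hu1 : u τ ^ p ≤ (a + b * τ ^ (-θ)) ^ p :=
        Real.rpow_le_rpow (hupos τ hτIoo).le (hub τ hτ) hp0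
      have hu2 : (a + b * τ ^ (-θ)) ^ p ≤ 2^p * (a^p + (b * τ ^ (-θ))^p) :=
        stmt7aux_add_rpow_le a _ p ha (mul_nonneg hb (Real.rpow_nonneg hτ0.le _)) hp0
      have hu3 : (b * τ ^ (-θ))^p = b^p * τ ^ (-(θ*p)) := by
        rw [Real.mul_rpow hb (Real.rpow_nonneg hτ0.le _), ← Real.rpow_mul hτ0.le,
          show (-θ)*p = -(θ*p) by ring]
      have hKu : K τ * u τ ^ p
          ≤ (2*k0*τ^α) * (2^p * (a^p + b^p * τ ^ (-(θ*p)))) := by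
        apply mul_le_mul hKb _ (Real.rpow_nonneg (hupos τ hτIoo).le p) _
        · calc u τ ^ p ≤ (a + b*τ^(-θ))^p := hu1
            _ ≤ 2^p * (a^p + (b*τ^(-θ))^p) := hu2
            _ = 2^p * (a^p + b^p * τ^(-(θ*p))) := by rw [hu3]
        · have := Real.rpow_nonneg hτ0.le α
          positivity
      have hfb2 : μ * f τ ≤ μ * (C * τ^ν) := mul_le_mul_of_nonneg_left hfb hμ
      have hstep1 : g τ ≤ τ^((N:ℝ)-1) *
          ((2*k0*τ^α) * (2^p * (a^p + b^p * τ^(-(θ*p)))) + μ * (C*τ^ν)) := by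
        simp only [hgdef]
        apply mul_le_mul_of_nonneg_left _ (Real.rpow_nonneg hτ0.le _)
        linarith
      have e1 : τ^((N:ℝ)-1+α) = τ^((N:ℝ)-1) * τ^α := Real.rpow_add hτ0 _ _
      have e2 : τ^((N:ℝ)-3-θ) = τ^((N:ℝ)-1) * (τ^α * τ^(-(θ*p))) := by
        rw [← Real.rpow_add hτ0, ← Real.rpow_add hτ0]
        congr 1
        linarith [hθp]
      have e3 : τ^((N:ℝ)-1+ν) = τ^((N:ℝ)-1) * τ^ν := Real.rpow_add hτ0 _ _
      calc g τ ≤ _ := hstep1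
        _ = c1 * a^p * τ^((N:ℝ)-1+α) + c1 * b^p * τ^((N:ℝ)-3-θ)
            + μ*C*τ^((N:ℝ)-1+ν) := by
          rw [e1, e2, e3, hc1def]; ring
    have hclaimA : ∀ t ∈ Ioc (0:ℝ) s, -(w t) ≤ G t := by
      intro t ht
      have ht0 : 0 < t := ht.1
      apply le_of_forall_pos_le_add
      intro ε hε
      obtain ⟨t', ht', hwt'⟩ := h2' ε hε t ⟨ht.1, le_trans ht.2 hss0⟩
      have ht'0 : 0 < t' := ht'.1
      have hFT := hFTCw t' t ht'0 ht'.2 (lt_of_le_of_lt ht.2 hsr1')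
      have ii1 : IntervalIntegrable (fun τ : ℝ => c1*a^p*τ^((N:ℝ)-1+α)) volume t' t :=
        (continuousOn_const.mul (hconrpow _ t' t ht'0 ht0)).intervalIntegrable
      have ii2 : IntervalIntegrable (fun τ : ℝ => c1*b^p*τ^((N:ℝ)-3-θ)) volume t' t :=
        (continuousOn_const.mul (hconrpow _ t' t ht'0 ht0)).intervalIntegrable
      have ii3 : IntervalIntegrable (fun τ : ℝ => μ*C*τ^((N:ℝ)-1+ν)) volume t' t :=
        (continuousOn_const.mul (hconrpow _ t' t ht'0 ht0)).intervalIntegrable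
      have hInt1 : ∫ τ in t'..t, g τ ≤ ∫ τ in t'..t,
          (c1*a^p*τ^((N:ℝ)-1+α) + c1*b^p*τ^((N:ℝ)-3-θ) + μ*C*τ^((N:ℝ)-1+ν)) := by
        apply intervalIntegral.integral_mono_on ht'.2
        · apply ContinuousOn.intervalIntegrable
          apply hgcont.mono
          rw [Set.uIcc_of_le ht'.2]
          intro τ hτ
          exact ⟨lt_of_lt_of_le ht'0 hτ.1,
            lt_of_le_of_lt (le_trans hτ.2 ht.2) hsr1'⟩
        · exact (ii1.add ii2).add ii3
        · intro τ hτ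
          exact hgbd τ ⟨lt_of_lt_of_le ht'0 hτ.1, le_trans hτ.2 ht.2⟩
      have i1 : ∫ τ in t'..t, c1*a^p*τ^((N:ℝ)-1+α)
          = c1*a^p * ((t^((N:ℝ)+α) - t'^((N:ℝ)+α)) / ((N:ℝ)+α)) := by
        rw [intervalIntegral.integral_const_mul,
          integral_rpow (Or.inl (by linarith : (-1:ℝ) < (N:ℝ)-1+α)),
          show ((N:ℝ)-1+α)+1 = (N:ℝ)+α by ring]
      have i2 : ∫ τ in t'..t, c1*b^p*τ^((N:ℝ)-3-θ)
          = c1*b^p * ((t^((N:ℝ)-2-θ) - t'^((N:ℝ)-2-θ)) / ((N:ℝ)-2-θ)) := by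
        rw [intervalIntegral.integral_const_mul,
          integral_rpow (Or.inl (by linarith : (-1:ℝ) < (N:ℝ)-3-θ)),
          show ((N:ℝ)-3-θ)+1 = (N:ℝ)-2-θ by ring]
      have i3 : ∫ τ in t'..t, μ*C*τ^((N:ℝ)-1+ν)
          = μ*C * ((t^((N:ℝ)+ν) - t'^((N:ℝ)+ν)) / ((N:ℝ)+ν)) := by
        rw [intervalIntegral.integral_const_mul,
          integral_rpow (Or.inl (by linarith : (-1:ℝ) < (N:ℝ)-1+ν)),
          show ((N:ℝ)-1+ν)+1 = (N:ℝ)+ν by ring]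
      have hInt2 : ∫ τ in t'..t,
          (c1*a^p*τ^((N:ℝ)-1+α) + c1*b^p*τ^((N:ℝ)-3-θ) + μ*C*τ^((N:ℝ)-1+ν))
          = G t - G t' := by
        rw [intervalIntegral.integral_add (ii1.add ii2) ii3,
          intervalIntegral.integral_add ii1 ii2, i1, i2, i3]
        simp only [hGdef]
        ring
      rw [hInt2] at hInt1
      have hGt' : 0 ≤ G t' := hGnn t' ht'0
      linarith
    -- integrate the bound on -w
    intro r hr
    have hr0 : 0 < r := hr.1
    have hFTu := hFTCu r s hr0 hr.2 hsr1'
    have hmono2 : ∫ t in r..s, t^(1-(N:ℝ)) * (-(G t))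
        ≤ ∫ t in r..s, t^(1-(N:ℝ)) * w t := by
      apply intervalIntegral.integral_mono_on hr.2
      · exact ((hconrpow _ r s hr0 hs0').mul
          (hGcont r s hr0 hs0').neg).intervalIntegrable
      · apply ContinuousOn.intervalIntegrable
        apply (hconrpow _ r s hr0 hs0').mul
        apply hwcont.mono
        rw [Set.uIcc_of_le hr.2]
        intro τ hτ
        exact ⟨lt_of_lt_of_le hr0 hτ.1, lt_of_le_of_lt hτ.2 hsr1'⟩
      · intro τ hτ
        have hτ0 : 0 < τ := lt_of_lt_of_le hr0 hτ.1
        have hA := hclaimA τ ⟨hτ0, hτ.2⟩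
        apply mul_le_mul_of_nonneg_left _ (Real.rpow_nonneg hτ0.le _)
        linarith
    have jj1 : IntervalIntegrable (fun t : ℝ => c1*a^p/((N:ℝ)+α) * t^(1+α)) volume r s :=
      (continuousOn_const.mul (hconrpow _ r s hr0 hs0')).intervalIntegrable
    have jj2 : IntervalIntegrable (fun t : ℝ => c1*b^p/((N:ℝ)-2-θ) * t^(-1-θ)) volume r s :=
      (continuousOn_const.mul (hconrpow _ r s hr0 hs0')).intervalIntegrable
    have jj3 : IntervalIntegrable (fun t : ℝ => μ*C/((N:ℝ)+ν) * t^(1+ν)) volume r s :=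
      (continuousOn_const.mul (hconrpow _ r s hr0 hs0')).intervalIntegrable
    have hbar : Set.EqOn (fun t : ℝ => t^(1-(N:ℝ)) * G t)
        (fun t : ℝ => c1*a^p/((N:ℝ)+α) * t^(1+α) + c1*b^p/((N:ℝ)-2-θ) * t^(-1-θ)
          + μ*C/((N:ℝ)+ν) * t^(1+ν)) (Set.uIcc r s) := by
      intro t ht
      have ht0 : 0 < t := hposIcc r s t hr0 hs0' ht
      show t^(1-(N:ℝ)) * G t = _
      have e1 : t^(1+α) = t^(1-(N:ℝ)) * t^((N:ℝ)+α) := by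
        rw [← Real.rpow_add ht0]; congr 1; ring
      have e2 : t^(-1-θ) = t^(1-(N:ℝ)) * t^((N:ℝ)-2-θ) := by
        rw [← Real.rpow_add ht0]; congr 1; ring
      have e3 : t^(1+ν) = t^(1-(N:ℝ)) * t^((N:ℝ)+ν) := by
        rw [← Real.rpow_add ht0]; congr 1; ring
      simp only [hGdef]
      rw [e1, e2, e3]
      ring
    have hIG : ∫ t in r..s, t^(1-(N:ℝ)) * G t
        = c1*a^p/((N:ℝ)+α) * ((s^(2+α) - r^(2+α))/(2+α))
          + c1*b^p/((N:ℝ)-2-θ) * ((s^(-θ) - r^(-θ))/(-θ))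
          + μ*C/((N:ℝ)+ν) * ((s^(2+ν) - r^(2+ν))/(2+ν)) := by
      have j1 : ∫ t in r..s, c1*a^p/((N:ℝ)+α) * t^(1+α)
          = c1*a^p/((N:ℝ)+α) * ((s^(2+α) - r^(2+α))/(2+α)) := by
        rw [intervalIntegral.integral_const_mul,
          integral_rpow (Or.inl (by linarith : (-1:ℝ) < 1+α)),
          show (1+α)+1 = 2+α by ring]
      have j2 : ∫ t in r..s, c1*b^p/((N:ℝ)-2-θ) * t^(-1-θ)
          = c1*b^p/((N:ℝ)-2-θ) * ((s^(-θ) - r^(-θ))/(-θ)) := by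
        rw [intervalIntegral.integral_const_mul,
          integral_rpow (Or.inr ⟨by intro hcontra; exact hθpos.ne' (by linarith),
            Set.notMem_uIcc_of_lt hr0 hs0'⟩),
          show (-1-θ)+1 = -θ by ring]
      have j3 : ∫ t in r..s, μ*C/((N:ℝ)+ν) * t^(1+ν)
          = μ*C/((N:ℝ)+ν) * ((s^(2+ν) - r^(2+ν))/(2+ν)) := by
        rw [intervalIntegral.integral_const_mul,
          integral_rpow (Or.inl (by linarith : (-1:ℝ) < 1+ν)),
          show (1+ν)+1 = 2+ν by ring]
      rw [intervalIntegral.integral_congr hbar,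
        intervalIntegral.integral_add (jj1.add jj2) jj3,
        intervalIntegral.integral_add jj1 jj2, j1, j2, j3]
    have hIneg : ∫ t in r..s, t^(1-(N:ℝ)) * (-(G t))
        = -∫ t in r..s, t^(1-(N:ℝ)) * G t := by
      rw [← intervalIntegral.integral_neg]
      congr 1
      funext t
      ring
    have hb1 : c1*a^p/((N:ℝ)+α) * ((s^(2+α) - r^(2+α))/(2+α)) ≤ A1 * a^p := by
      have hne1 : ((N:ℝ)+α) ≠ 0 := hNα.ne'
      have hne2 : (2+α) ≠ 0 := h2α.ne'
      have key : A1 * a^p - c1*a^p/((N:ℝ)+α) * ((s^(2+α) - r^(2+α))/(2+α))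
          = c1*a^p*r^(2+α)/(((N:ℝ)+α)*(2+α)) := by
        simp only [hA1def]
        field_simp
        ring
      have h2 : 0 ≤ c1*a^p*r^(2+α)/(((N:ℝ)+α)*(2+α)) :=
        div_nonneg (mul_nonneg (mul_nonneg hc1.le (Real.rpow_nonneg ha p))
          (Real.rpow_nonneg hr0.le _)) (mul_pos hNα h2α).le
      linarith
    have hb2 : c1*b^p/((N:ℝ)-2-θ) * ((s^(-θ) - r^(-θ))/(-θ)) ≤ B * b^p * r^(-θ) := by
      have hne1 : ((N:ℝ)-2-θ) ≠ 0 := hNθ.ne'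
      have hne2 : θ ≠ 0 := hθpos.ne'
      have key : B * b^p * r^(-θ) - c1*b^p/((N:ℝ)-2-θ) * ((s^(-θ) - r^(-θ))/(-θ))
          = c1*b^p*s^(-θ)/(((N:ℝ)-2-θ)*θ) := by
        simp only [hBdef]
        field_simp
        ring
      have h2 : 0 ≤ c1*b^p*s^(-θ)/(((N:ℝ)-2-θ)*θ) :=
        div_nonneg (mul_nonneg (mul_nonneg hc1.le (Real.rpow_nonneg hb p))
          (Real.rpow_nonneg hs0'.le _)) (mul_pos hNθ hθpos).le
      linarith
    have hb3 : μ*C/((N:ℝ)+ν) * ((s^(2+ν) - r^(2+ν))/(2+ν)) ≤ A2 := by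
      have hne1 : ((N:ℝ)+ν) ≠ 0 := hNν.ne'
      have hne2 : (2+ν) ≠ 0 := h2ν.ne'
      have key : A2 - μ*C/((N:ℝ)+ν) * ((s^(2+ν) - r^(2+ν))/(2+ν))
          = μ*C*r^(2+ν)/(((N:ℝ)+ν)*(2+ν)) := by
        simp only [hA2def]
        field_simp
        ring
      have h2 : 0 ≤ μ*C*r^(2+ν)/(((N:ℝ)+ν)*(2+ν)) :=
        div_nonneg (mul_nonneg (mul_nonneg hμ hC.le)
          (Real.rpow_nonneg hr0.le _)) (mul_pos hNν h2ν).le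
      linarith
    linarith [hFTu, hmono2, hIneg, hIG, hb1, hb2, hb3]
  -- the iteration
  have hind : ∀ n : ℕ, ∀ t ∈ Ioc (0:ℝ) s, u t ≤ 2*D + c * (1/2)^n * t ^ (-θ) := by
    intro n
    induction n with
    | zero =>
      intro t ht
      have h := hbase t ht
      have h2 : (0:ℝ) ≤ 2*D := by linarith
      have h3 : c * (1/2:ℝ)^0 * t^(-θ) = c * t^(-θ) := by norm_num
      rw [h3]
      linarith
    | succ n ih =>
      have hstepn := hstep (2*D) (c*(1/2)^n) (by linarith)
        (by positivity) ih
      intro t ht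
      have h := hstepn t ht
      have hDp : D ^ p = D^(p-1) * D := by
        nth_rewrite 1 [show p = (p-1)+1 by ring]
        rw [Real.rpow_add_one hD.ne']
      have hsθ : A1 * 2^p * D^(p-1) = Cc2 * (s^θ * D)^(p-1) := by
        rw [Real.mul_rpow (Real.rpow_nonneg hs0'.le θ) hD.le, ← Real.rpow_mul hs0'.le,
          hθmul]
        simp only [hA1def, hCc2def]
        ring
      have hmono3 : Cc2 * (s^θ*D)^(p-1) ≤ Cc2 * (2*c)^(p-1) :=
        mul_le_mul_of_nonneg_left
          (Real.rpow_le_rpow (mul_nonneg (Real.rpow_nonneg hs0'.le θ) hD.le) hsθD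
            (by linarith)) hCc2.le
      have h2c : (2*c)^(p-1) = 2^(p-1) * c^(p-1) := Real.mul_rpow (by norm_num) hc.le
      have hfin : A1 * 2^p * D^(p-1) ≤ 1/2 := by
        rw [hsθ]
        calc Cc2 * (s^θ*D)^(p-1) ≤ Cc2 * (2*c)^(p-1) := hmono3
          _ = K2 * c^(p-1) := by rw [h2c, hK2def]; ring
          _ ≤ 1/2 := hcK
      have hexp : A1 * (2*D)^p = (A1 * 2^p * D^(p-1)) * D := by
        rw [Real.mul_rpow (by norm_num : (0:ℝ) ≤ 2) hD.le, hDp]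
        ring
      have hA1D : A1 * (2*D)^p ≤ D := by
        rw [hexp]
        calc (A1*2^p*D^(p-1))*D ≤ (1/2)*D := mul_le_mul_of_nonneg_right hfin hD.le
          _ ≤ D := by linarith
      have hcoef1 : u s + A1 * (2*D)^p + A2 ≤ 2*D := by
        have : D = u s + A2 := hDdef
        linarith
      have hcoef2 : B * (c*(1/2:ℝ)^n)^p ≤ c * (1/2)^(n+1) := by
        have hb'pos : (0:ℝ) < c * (1/2:ℝ)^n := by positivity
        have hb'le : c * (1/2:ℝ)^n ≤ c := by
          have h5 : ((1:ℝ)/2)^n ≤ 1 := pow_le_one₀ (by norm_num) (by norm_num)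
          calc c * (1/2:ℝ)^n ≤ c * 1 := mul_le_mul_of_nonneg_left h5 hc.le
            _ = c := mul_one c
        have h1 : (c*(1/2:ℝ)^n)^p = (c*(1/2:ℝ)^n)^(p-1) * (c*(1/2:ℝ)^n) := by
          nth_rewrite 1 [show p = (p-1)+1 by ring]
          rw [Real.rpow_add_one hb'pos.ne']
        have h2 : (c*(1/2:ℝ)^n)^(p-1) ≤ c^(p-1) :=
          Real.rpow_le_rpow hb'pos.le hb'le (by linarith)
        calc B * (c*(1/2:ℝ)^n)^p = (B * (c*(1/2:ℝ)^n)^(p-1)) * (c*(1/2:ℝ)^n) := by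
              rw [h1]; ring
          _ ≤ (B * c^(p-1)) * (c*(1/2:ℝ)^n) :=
              mul_le_mul_of_nonneg_right (mul_le_mul_of_nonneg_left h2 hB.le) hb'pos.le
          _ ≤ (1/2) * (c*(1/2:ℝ)^n) := mul_le_mul_of_nonneg_right hcB hb'pos.le
          _ = c * (1/2)^(n+1) := by ring
      have h4 : B*(c*(1/2:ℝ)^n)^p * t^(-θ) ≤ c*(1/2:ℝ)^(n+1) * t^(-θ) :=
        mul_le_mul_of_nonneg_right hcoef2 (Real.rpow_nonneg ht.1.le _)
      linarith
  have hbound : ∀ t ∈ Ioc (0:ℝ) s, u t ≤ 2*D := by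
    intro t ht
    have ht0 : 0 < t := ht.1
    apply le_of_forall_pos_le_add
    intro ε hε
    have htθ : (0:ℝ) < c * t^(-θ) := by
      have := Real.rpow_pos_of_pos ht0 (-θ)
      positivity
    obtain ⟨n, hn⟩ := exists_pow_lt_of_lt_one (x := ε / (c * t^(-θ)))
      (div_pos hε htθ) (by norm_num : (1/2:ℝ) < 1)
    have h := hind n t ht
    have h2 : (1/2:ℝ)^n * (c*t^(-θ)) < ε := (lt_div_iff₀ htθ).1 hn
    have h3 : c*(1/2:ℝ)^n * t^(-θ) = (1/2:ℝ)^n * (c*t^(-θ)) := by ring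
    linarith
  have hev1 : ∀ᶠ r in 𝓝[>] (0:ℝ), 2*D < u r :=
    hsing.eventually (eventually_gt_atTop _)
  have hev2 : ∀ᶠ r in 𝓝[>] (0:ℝ), r ∈ Ioc (0:ℝ) s :=
    eventually_mem_set.2 (Ioc_mem_nhdsGT_of_mem ⟨le_refl (0:ℝ), hs0'⟩)
  obtain ⟨r, hra, hrb⟩ := (hev1.and hev2).exists
  exact absurd (hbound r hrb) (not_le.2 hra)
end
end

section
/- Suppose N ≥ 3, conditions (K0), (K∞), (f0), (f∞) hold, p > max{p_S(α), p_S(β)}, and μ ≥ 0. Assume u*_μ(r) > 0 for all r > 0 and limsup_{r→∞} r^{N-2} u*_μ(r) < ∞. Then the limit η(μ) := lim_{r→∞} r^{N-2} u*_μ(r) exists, and for all r > 0: (u*_μ)'(r) = r^{1-N} ( -(N-2)η(μ) + ∫_r^∞ s^{N-1}(K(s)u*_μ(s)^p + μ f(s)) ds ) and u*_μ(r) = r^{2-N} η(μ) - (1/(N-2)) ∫_r^∞ (r^{2-N} - t^{2-N}) t^{N-1} (K(t)u*_μ(t)^p + μ f(t)) dt. Furthermore, the function r ↦ r^{N-2}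 u*_μ(r) is strictly increasing on (0,∞). -/
open Real Filter Set MeasureTheory Topology

noncomputable section

/-- `u` solves `u'' + (N-1)/r u' + K(r) max{u,0}^p + μ f = 0` on `(0,∞)` with
`r^θ u(r) → γ` as `r → 0+` (the defining property of `u*_μ`). -/
def SingAux (N : ℕ) (p μ α k0 : ℝ) (K f u : ℝ → ℝ) : Prop :=
  ContDiffOn ℝ 2 u (Ioi 0) ∧
    (∀ r : ℝ, 0 < r →
      deriv (deriv u) r + ((N : ℝ) - 1) / r * deriv u r
        + K r * (max (u r) 0) ^ p + μ * f r = 0) ∧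
    Tendsto (fun r : ℝ => r ^ θconst p α * u r) (𝓝[>] 0) (𝓝 (γconst N p α k0))



private lemma const_of_hasDerivAt_zero' {D : ℝ → ℝ} (h : ∀ r : ℝ, 0 < r → HasDerivAt D 0 r)
    {a b : ℝ} (ha : 0 < a) (hab : a ≤ b) : D b = D a := by
  have hcont : ContinuousOn D (Icc a b) := fun x hx =>
    ((h x (lt_of_lt_of_le ha hx.1)).continuousAt).continuousWithinAt
  exact constant_of_has_deriv_right_zero hcont
    (fun x hx => (h x (lt_of_lt_of_le ha hx.1)).hasDerivWithinAt) b ⟨hab, le_rfl⟩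

private lemma eq_zero_of_hasDerivAt_zero' {D : ℝ → ℝ}
    (h : ∀ r : ℝ, 0 < r → HasDerivAt D 0 r) (hlim : Tendsto D atTop (𝓝 0))
    {r : ℝ} (hr : 0 < r) : D r = 0 := by
  have hev : ∀ᶠ x in atTop, D x = D r := by
    filter_upwards [eventually_ge_atTop r] with x hx
    exact const_of_hasDerivAt_zero' h hr hx
  have h3 : Tendsto (fun _ : ℝ => D r) atTop (𝓝 0) := Tendsto.congr' hev hlim
  exact (tendsto_nhds_unique h3 tendsto_const_nhds).symm

private lemma tail_split' {v : ℝ → ℝ} {a b : ℝ} (hab : a ≤ b)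
    (hint : IntegrableOn v (Ioi a) volume) :
    ∫ t in Ioi a, v t = (∫ t in Ioc a b, v t) + ∫ t in Ioi b, v t := by
  rw [← setIntegral_union (Ioc_disjoint_Ioi le_rfl) measurableSet_Ioi
    (hint.mono_set Ioc_subset_Ioi_self) (hint.mono_set (Ioi_subset_Ioi hab)),
    Ioc_union_Ioi_eq_Ioi hab]

private lemma tail_repr' {v : ℝ → ℝ} (hint : ∀ r : ℝ, 0 < r → IntegrableOn v (Ioi r) volume)
    {x : ℝ} (hx : 0 < x) :
    (∫ t in Ioi x, v t) = (∫ t in Ioi 1, v t) - ∫ t in (1:ℝ)..x, v t := by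
  rcases le_total x 1 with h | h
  · have h2 : ∫ t in (1:ℝ)..x, v t = -∫ t in Ioc x 1, v t := by
      rw [← intervalIntegral.integral_of_le h, intervalIntegral.integral_symm]
    rw [h2, tail_split' h (hint x hx)]; ring
  · rw [intervalIntegral.integral_of_le h, tail_split' h (hint 1 one_pos)]; ring

private lemma tail_hasDerivAt' {v : ℝ → ℝ} (hcont : ContinuousOn v (Ioi 0))
    (hint : ∀ r : ℝ, 0 < r → IntegrableOn v (Ioi r) volume)
    {r : ℝ} (hr : 0 < r) :
    HasDerivAt (fun x => ∫ t in Ioi x, v t) (-(v r)) r := by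
  have hsub : uIcc 1 r ⊆ Ioi 0 := fun x hx =>
    lt_of_lt_of_le (lt_min one_pos hr) hx.1
  have hii : IntervalIntegrable v volume 1 r := (hcont.mono hsub).intervalIntegrable
  have hd : HasDerivAt (fun x => (∫ t in Ioi 1, v t) - ∫ t in (1:ℝ)..x, v t) (-(v r)) r := by
    have h := intervalIntegral.integral_hasDerivAt_right hii
      (hcont.stronglyMeasurableAtFilter isOpen_Ioi r hr)
      (hcont.continuousAt (Ioi_mem_nhds hr))
    exact ((hasDerivAt_const r (∫ t in Ioi 1, v t)).sub h).congr_deriv (zero_sub _)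
  refine hd.congr_of_eventuallyEq ?_
  filter_upwards [Ioi_mem_nhds hr] with x hx
  exact tail_repr' hint hx

private lemma tail_tendsto_zero' {v : ℝ → ℝ}
    (hint : ∀ r : ℝ, 0 < r → IntegrableOn v (Ioi r) volume) :
    Tendsto (fun x => ∫ t in Ioi x, v t) atTop (𝓝 0) := by
  have h1 : Tendsto (fun x : ℝ => ∫ t in (1:ℝ)..x, v t) atTop (𝓝 (∫ t in Ioi 1, v t)) :=
    intervalIntegral_tendsto_integral_Ioi 1 (hint 1 one_pos) tendsto_id
  have h2 : Tendsto (fun x : ℝ => (∫ t in Ioi 1, v t) - ∫ t in (1:ℝ)..x, v t) atTop (𝓝 0) := by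
    simpa using (tendsto_const_nhds (x := ∫ t in Ioi 1, v t) (f := atTop)).sub h1
  refine h2.congr' ?_
  filter_upwards [eventually_gt_atTop 0] with x hx
  exact (tail_repr' hint hx).symm



/-- Lemma 6.2: if `u*_μ` is positive on `(0,∞)` and fast-decaying,
then `η(μ) = lim_{r→∞} r^{N-2} u*_μ(r)` exists, the integral representation formulas
hold, and `r ↦ r^{N-2} u*_μ(r)` is strictly increasing. -/
theorem stmt17 (N : ℕ) (p μ α k0 β kinf : ℝ) (K f U : ℝ → ℝ)
    (hN : 3 ≤ N) (hp1 : 1 < p) (hμ : 0 ≤ μ)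
    (hK0 : CondK0 K α k0) (hKinf : CondKinf K β kinf)
    (hf0 : CondF0 f) (hfinf : CondFinf N f)
    (hp : max (pS N α) (pS N β) < p)
    (hU : SingAux N p μ α k0 K f U)
    (hpos : ∀ r : ℝ, 0 < r → 0 < U r)
    (hfast : ∃ M : ℝ, ∀ᶠ r in atTop, r ^ ((N : ℝ) - 2) * U r ≤ M) :
    ∃ η : ℝ, Tendsto (fun r : ℝ => r ^ ((N : ℝ) - 2) * U r) atTop (𝓝 η) ∧
      (∀ r : ℝ, 0 < r →
        deriv U r = r ^ (1 - (N : ℝ)) *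
          (-((N : ℝ) - 2) * η +
            ∫ s in Ioi r, s ^ ((N : ℝ) - 1) * (K s * U s ^ p + μ * f s))) ∧
      (∀ r : ℝ, 0 < r →
        U r = r ^ (2 - (N : ℝ)) * η - (1 / ((N : ℝ) - 2)) *
          ∫ t in Ioi r,
            (r ^ (2 - (N : ℝ)) - t ^ (2 - (N : ℝ))) * t ^ ((N : ℝ) - 1)
              * (K t * U t ^ p + μ * f t)) ∧
      StrictMonoOn (fun r : ℝ => r ^ ((N : ℝ) - 2) * U r) (Ioi 0) := by
  
  obtain ⟨hKpos, hKcont, hα, hk0, -⟩ := hK0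
  obtain ⟨hβ, hkinf2, hKlim⟩ := hKinf
  obtain ⟨hfcont, hfnn, -, -⟩ := hf0
  obtain ⟨q, hqN, Cf, hCf, R0, hR0, hfq⟩ := hfinf
  obtain ⟨hC2, hode, -⟩ := hU
  obtain ⟨M0, hM0⟩ := hfast
  have hpβ : pS N β < p := (le_max_right (pS N α) (pS N β)).trans_lt hp
  rename' hkinf2 => hkinf
  have hN3 : (3:ℝ) ≤ (N:ℝ) := by exact_mod_cast hN
  have hN2 : (0:ℝ) < (N:ℝ) - 2 := by linarith
  have hp0 : (0:ℝ) ≤ p := by linarith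
  set g : ℝ → ℝ := fun s => K s * U s ^ p + μ * f s with hg_def
  set φ : ℝ → ℝ := fun s => s ^ ((N:ℝ)-1) * g s with hφ_def
  set ψ : ℝ → ℝ := fun s => s * g s with hψ_def
  have hgpos : ∀ s : ℝ, 0 < s → 0 < g s := fun s hs =>
    add_pos_of_pos_of_nonneg (mul_pos (hKpos s hs) (Real.rpow_pos_of_pos (hpos s hs) p))
      (mul_nonneg hμ (hfnn s hs))
  have hφnn : ∀ s : ℝ, 0 < s → 0 ≤ φ s := fun s hs =>
    mul_nonneg (Real.rpow_nonneg hs.le _) (hgpos s hs).le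
  -- continuity
  have hUcont : ContinuousOn U (Ioi 0) := hC2.continuousOn
  have hgcont : ContinuousOn g (Ioi 0) :=
    (hKcont.mul (hUcont.rpow_const (fun x _ => Or.inr hp0))).add
      (continuousOn_const.mul hfcont)
  have hφcont : ContinuousOn φ (Ioi 0) :=
    (continuousOn_id.rpow_const fun x hx => Or.inl (ne_of_gt hx)).mul hgcont
  have hψcont : ContinuousOn ψ (Ioi 0) := continuousOn_id.mul hgcont
  -- eventual bound on φ
  set M : ℝ := max M0 1 with hM_def
  have hMpos : (0:ℝ) < M := lt_of_lt_of_le one_pos (le_max_right _ _)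
  have hUb : ∀ᶠ s in atTop, U s ≤ M * s ^ (2-(N:ℝ)) := by
    filter_upwards [hM0, eventually_gt_atTop 0] with s hs hs0
    have h1 : s ^ ((N:ℝ)-2) * U s ≤ M := le_trans hs (le_max_left _ _)
    have key : s ^ (2-(N:ℝ)) * (s ^ ((N:ℝ)-2) * U s) = U s := by
      rw [← mul_assoc, ← Real.rpow_add hs0]
      norm_num
    calc U s = s ^ (2-(N:ℝ)) * (s ^ ((N:ℝ)-2) * U s) := key.symm
      _ ≤ s ^ (2-(N:ℝ)) * M :=
          mul_le_mul_of_nonneg_left h1 (Real.rpow_pos_of_pos hs0 _).le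
      _ = M * s ^ (2-(N:ℝ)) := mul_comm _ _
  have hKb : ∀ᶠ s in atTop, K s ≤ (kinf+1) * s ^ β := by
    filter_upwards [hKlim.eventually (eventually_lt_nhds (lt_add_one kinf)),
      eventually_gt_atTop 0] with s hs hs0
    have key : s ^ β * (s ^ (-β) * K s) = K s := by
      rw [← mul_assoc, ← Real.rpow_add hs0]
      simp
    calc K s = s ^ β * (s ^ (-β) * K s) := key.symm
      _ ≤ s ^ β * (kinf+1) :=
          mul_le_mul_of_nonneg_left hs.le (Real.rpow_nonneg hs0.le β)
      _ = (kinf+1) * s ^ β := mul_comm _ _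
  set e1 : ℝ := (N:ℝ) - 1 + (β + (2-(N:ℝ))*p) with he1_def
  set e2 : ℝ := (N:ℝ) - 1 + (-q) with he2_def
  have he1 : e1 < -1 := by
    rw [pS, div_lt_iff₀ hN2] at hpβ
    have : (N:ℝ) + β < p * ((N:ℝ)-2) := by linarith
    simp only [he1_def]; nlinarith
  have he2 : e2 < -1 := by simp only [he2_def]; linarith
  have hφbd : ∀ᶠ s in atTop, φ s ≤ (kinf+1)*M^p * s ^ e1 + μ*Cf * s ^ e2 := by
    filter_upwards [hUb, hKb, eventually_gt_atTop (max R0 1)] with s hU' hK' hR'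
    have hs0 : (0:ℝ) < s := lt_of_le_of_lt (by positivity) hR'
    have hfs : f s ≤ Cf * s ^ (-q) := hfq s (lt_of_le_of_lt (le_max_left _ _) hR')
    have hUp : U s ^ p ≤ M^p * s^((2-(N:ℝ))*p) := by
      calc U s ^ p ≤ (M * s ^ (2-(N:ℝ))) ^ p :=
            Real.rpow_le_rpow (hpos s hs0).le hU' hp0
        _ = M^p * s^((2-(N:ℝ))*p) := by
            rw [Real.mul_rpow hMpos.le (Real.rpow_nonneg hs0.le _), ← Real.rpow_mul hs0.le]
    have h1 : s ^ ((N:ℝ)-1) * (K s * U s ^ p) ≤ (kinf+1)*M^p * s ^ e1 := by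
      have hb : K s * U s ^ p ≤ ((kinf+1) * s ^ β) * (M^p * s^((2-(N:ℝ))*p)) := by
        apply mul_le_mul hK' hUp (Real.rpow_nonneg (hpos s hs0).le p)
        positivity
      calc s ^ ((N:ℝ)-1) * (K s * U s ^ p)
          ≤ s ^ ((N:ℝ)-1) * (((kinf+1) * s ^ β) * (M^p * s^((2-(N:ℝ))*p))) :=
            mul_le_mul_of_nonneg_left hb (Real.rpow_nonneg hs0.le _)
        _ = (kinf+1)*M^p * (s ^ ((N:ℝ)-1) * (s ^ β * s^((2-(N:ℝ))*p))) := by ring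
        _ = (kinf+1)*M^p * s ^ e1 := by
            rw [← Real.rpow_add hs0, ← Real.rpow_add hs0]
    have h2 : s ^ ((N:ℝ)-1) * (μ * f s) ≤ μ*Cf * s ^ e2 := by
      have hb : μ * f s ≤ μ * (Cf * s ^ (-q)) :=
        mul_le_mul_of_nonneg_left hfs hμ
      calc s ^ ((N:ℝ)-1) * (μ * f s) ≤ s ^ ((N:ℝ)-1) * (μ * (Cf * s ^ (-q))) :=
            mul_le_mul_of_nonneg_left hb (Real.rpow_nonneg hs0.le _)
        _ = μ*Cf * (s ^ ((N:ℝ)-1) * s ^ (-q)) := by ring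
        _ = μ*Cf * s ^ e2 := by rw [← Real.rpow_add hs0]
    calc φ s = s ^ ((N:ℝ)-1) * (K s * U s ^ p) + s ^ ((N:ℝ)-1) * (μ * f s) := by
          simp only [hφ_def, hg_def]; ring
      _ ≤ (kinf+1)*M^p * s ^ e1 + μ*Cf * s ^ e2 := add_le_add h1 h2
  -- integrability
  have hφint : ∀ r : ℝ, 0 < r → IntegrableOn φ (Ioi r) volume := by
    intro r hr
    obtain ⟨A0, hA0⟩ := eventually_atTop.mp hφbd
    set A : ℝ := max A0 r with hA_def
    have hrA : r ≤ A := le_max_right _ _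
    have hApos : 0 < A := lt_of_lt_of_le hr hrA
    have h1 : IntegrableOn φ (Ioc r A) volume := by
      refine ((hφcont.mono ?_).integrableOn_Icc).mono_set Ioc_subset_Icc_self
      exact fun x hx => lt_of_lt_of_le hr hx.1
    have h2 : IntegrableOn (fun s => (kinf+1)*M^p * s ^ e1 + μ*Cf * s ^ e2) (Ioi A) volume :=
      ((integrableOn_Ioi_rpow_of_lt he1 hApos).const_mul _).add
        ((integrableOn_Ioi_rpow_of_lt he2 hApos).const_mul _)
    have h3 : IntegrableOn φ (Ioi A) volume := by
      refine Integrable.mono' h2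
        ((hφcont.mono (Ioi_subset_Ioi hApos.le)).aestronglyMeasurable measurableSet_Ioi) ?_
      filter_upwards [ae_restrict_mem measurableSet_Ioi] with x hx
      have hx0 : (0:ℝ) < x := hApos.trans hx
      rw [Real.norm_eq_abs, abs_of_nonneg (hφnn x hx0)]
      exact hA0 x (le_of_lt (lt_of_le_of_lt (le_max_left A0 r) hx))
    have := h1.union h3
    rwa [Ioc_union_Ioi_eq_Ioi hrA] at this
  have hψφ : ∀ r : ℝ, 0 < r → ∀ t ∈ Ioi r, ψ t ≤ r ^ (2-(N:ℝ)) * φ t := by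
    intro r hr t ht
    have ht0 : 0 < t := hr.trans ht
    have e3 : t ^ (2-(N:ℝ)) * t ^ ((N:ℝ)-1) = t := by
      rw [← Real.rpow_add ht0]; norm_num
    have : ψ t = t ^ (2-(N:ℝ)) * φ t := by
      simp only [hψ_def, hφ_def]; rw [← mul_assoc, e3]
    rw [this]
    exact mul_le_mul_of_nonneg_right
      (Real.rpow_le_rpow_of_nonpos hr (le_of_lt ht) (by linarith)) (hφnn t ht0)
  have hψint : ∀ r : ℝ, 0 < r → IntegrableOn ψ (Ioi r) volume := by
    intro r hr
    refine Integrable.mono' ((hφint r hr).const_mul (r ^ (2-(N:ℝ))))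
      ((hψcont.mono (Ioi_subset_Ioi hr.le)).aestronglyMeasurable measurableSet_Ioi) ?_
    filter_upwards [ae_restrict_mem measurableSet_Ioi] with x hx
    have hx0 : (0:ℝ) < x := hr.trans hx
    rw [Real.norm_eq_abs, abs_of_nonneg (mul_nonneg hx0.le (hgpos x hx0).le)]
    exact hψφ r hr x hx
  -- tail integrals
  set Φ : ℝ → ℝ := fun x => ∫ t in Ioi x, φ t with hΦ_def
  set G : ℝ → ℝ := fun x => ∫ t in Ioi x, ψ t with hG_def
  have hΦd : ∀ r : ℝ, 0 < r → HasDerivAt Φ (-(φ r)) r :=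
    fun r hr => tail_hasDerivAt' hφcont hφint hr
  have hGd : ∀ r : ℝ, 0 < r → HasDerivAt G (-(ψ r)) r :=
    fun r hr => tail_hasDerivAt' hψcont hψint hr
  have hΦ0 : Tendsto Φ atTop (𝓝 0) := tail_tendsto_zero' hφint
  have hG0 : Tendsto G atTop (𝓝 0) := tail_tendsto_zero' hψint
  have hΦnn : ∀ r : ℝ, 0 < r → 0 ≤ Φ r := fun r hr =>
    setIntegral_nonneg measurableSet_Ioi (fun x hx => hφnn x (hr.trans hx))
  have hGnn : ∀ r : ℝ, 0 < r → 0 ≤ G r := fun r hr =>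
    setIntegral_nonneg measurableSet_Ioi
      (fun x hx => mul_nonneg (hr.trans hx).le (hgpos x (hr.trans hx)).le)
  -- derivatives of U
  have hUd : ∀ r : ℝ, 0 < r → HasDerivAt U (deriv U r) r := fun r hr =>
    ((hC2.differentiableOn (by norm_num)).differentiableAt (Ioi_mem_nhds hr)).hasDerivAt
  have hC1' : ContDiffOn ℝ 1 (deriv U) (Ioi 0) := hC2.deriv_of_isOpen isOpen_Ioi (by norm_num)
  have hU'd : ∀ r : ℝ, 0 < r → HasDerivAt (deriv U) (deriv (deriv U) r) r := fun r hr =>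
    ((hC1'.differentiableOn one_ne_zero).differentiableAt (Ioi_mem_nhds hr)).hasDerivAt
  -- the ODE without max
  have hode' : ∀ r : ℝ, 0 < r → deriv (deriv U) r = -(((N:ℝ)-1)/r * deriv U r + g r) := by
    intro r hr
    have h := hode r hr
    rw [max_eq_left (hpos r hr).le] at h
    simp only [hg_def]
    linarith
  -- H and its derivative
  set H : ℝ → ℝ := fun x => x ^ ((N:ℝ)-1) * deriv U x with hH_def
  have hHd : ∀ r : ℝ, 0 < r → HasDerivAt H (-(φ r)) r := by
    intro r hr
    have h1 : HasDerivAt (fun x : ℝ => x ^ ((N:ℝ)-1)) (((N:ℝ)-1) * r ^ ((N:ℝ)-1-1)) r :=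
      Real.hasDerivAt_rpow_const (Or.inl (ne_of_gt hr))
    have h2 := h1.mul (hU'd r hr)
    have h2 : HasDerivAt (fun x => x ^ ((N:ℝ)-1) * deriv U x) _ r := h2
    convert h2 using 1
    rw [hode' r hr]
    have hr2 : r ^ ((N:ℝ)-1) = r ^ ((N:ℝ)-1-1) * r := by
      rw [← Real.rpow_add_one (ne_of_gt hr)]
      congr 1
      ring
    simp only [hφ_def]
    rw [hr2]
    field_simp
    ring
  have hHΦd : ∀ r : ℝ, 0 < r → HasDerivAt (fun x => H x - Φ x) 0 r := by
    intro r hr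
    exact ((hHd r hr).sub (hΦd r hr)).congr_deriv (sub_self _)
  have hHconst : ∀ r : ℝ, 0 < r → H r - Φ r = H 1 - Φ 1 := by
    intro r hr
    rcases le_total r 1 with h | h
    · exact (const_of_hasDerivAt_zero' hHΦd hr h).symm
    · exact const_of_hasDerivAt_zero' hHΦd one_pos h
  set L : ℝ := H 1 - Φ 1 with hL_def
  set η : ℝ := -L / ((N:ℝ)-2) with hη_def
  have hLη : L = -((N:ℝ)-2) * η := by
    rw [hη_def]
    field_simp
  have hHeq : ∀ r : ℝ, 0 < r → H r = L + Φ r := by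
    intro r hr
    have := hHconst r hr
    linarith
  have hU'eq : ∀ r : ℝ, 0 < r → deriv U r = r ^ (1-(N:ℝ)) * (L + Φ r) := by
    intro r hr
    have h2 : r ^ (1-(N:ℝ)) * r ^ ((N:ℝ)-1) = 1 := by
      rw [← Real.rpow_add hr]
      norm_num
    calc deriv U r = r ^ (1-(N:ℝ)) * (r ^ ((N:ℝ)-1) * deriv U r) := by
          rw [← mul_assoc, h2, one_mul]
      _ = r ^ (1-(N:ℝ)) * H r := rfl
      _ = r ^ (1-(N:ℝ)) * (L + Φ r) := by rw [hHeq r hr]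
  -- V and the second representation
  have hrpc : ∀ r : ℝ, 0 < r →
      HasDerivAt (fun x : ℝ => x ^ (2-(N:ℝ))) ((2-(N:ℝ)) * r ^ (2-(N:ℝ)-1)) r :=
    fun r hr => Real.hasDerivAt_rpow_const (Or.inl (ne_of_gt hr))
  set V : ℝ → ℝ := fun x => η * x ^ (2-(N:ℝ)) - (1/((N:ℝ)-2)) * (x ^ (2-(N:ℝ)) * Φ x - G x)
    with hV_def
  have hVd : ∀ r : ℝ, 0 < r → HasDerivAt V (deriv U r) r := by
    intro r hr
    have h1 := (hrpc r hr).const_mul η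
    have h2 := ((hrpc r hr).mul (hΦd r hr)).sub (hGd r hr)
    have h3 := h1.sub (h2.const_mul (1/((N:ℝ)-2)))
    have h3 : HasDerivAt (fun x => η * x ^ (2-(N:ℝ)) - (1/((N:ℝ)-2)) * (x ^ (2-(N:ℝ)) * Φ x - G x)) _ r := h3
    convert h3 using 1
    rw [hU'eq r hr, hLη]
    have eexp : (2-(N:ℝ)-1) = 1-(N:ℝ) := by ring
    rw [eexp]
    have e2 : r ^ (2-(N:ℝ)) * φ r = ψ r := by
      simp only [hφ_def, hψ_def]
      rw [← mul_assoc, ← Real.rpow_add hr]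
      norm_num
    rw [← e2]
    field_simp
    ring
  -- limits at infinity
  have hc2N : Tendsto (fun x : ℝ => x ^ (2-(N:ℝ))) atTop (𝓝 0) := by
    have := tendsto_rpow_neg_atTop hN2
    simpa [neg_sub] using this
  have hU0 : Tendsto U atTop (𝓝 0) := by
    have hM2N : Tendsto (fun x : ℝ => M * x ^ (2-(N:ℝ))) atTop (𝓝 0) := by
      simpa using hc2N.const_mul M
    refine tendsto_of_tendsto_of_tendsto_of_le_of_le' tendsto_const_nhds hM2N ?_ hUb
    filter_upwards [eventually_gt_atTop 0] with x hx
    exact (hpos x hx).le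
  have hV0 : Tendsto V atTop (𝓝 0) := by
    have h := (hc2N.const_mul η).sub (((hc2N.mul hΦ0).sub hG0).const_mul (1/((N:ℝ)-2)))
    have hz : (η * 0 - 1/((N:ℝ)-2) * (0*0-0) : ℝ) = 0 := by norm_num
    rw [hV_def, ← hz]
    exact h
  have hUV : ∀ r : ℝ, 0 < r → U r = V r := by
    intro r hr
    have hd : ∀ x : ℝ, 0 < x → HasDerivAt (fun y => U y - V y) 0 x := by
      intro x hx
      exact ((hUd x hx).sub (hVd x hx)).congr_deriv (sub_self _)
    have h0 : Tendsto (fun y => U y - V y) atTop (𝓝 0) := by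
      simpa using hU0.sub hV0
    have := eq_zero_of_hasDerivAt_zero' hd h0 hr
    linarith
  -- division-free form
  have hUr : ∀ r : ℝ, 0 < r → ((N:ℝ)-2) * U r
      = ((N:ℝ)-2) * η * r ^ (2-(N:ℝ)) - (r ^ (2-(N:ℝ)) * Φ r - G r) := by
    intro r hr
    rw [hUV r hr]
    simp only [hV_def]
    field_simp
  -- scaled identity
  have hw_eq : ∀ r : ℝ, 0 < r → ((N:ℝ)-2) * (r ^ ((N:ℝ)-2) * U r)
      = ((N:ℝ)-2)*η - Φ r + r ^ ((N:ℝ)-2) * G r := by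
    intro r hr
    have i0 : r ^ ((N:ℝ)-2) * r ^ (2-(N:ℝ)) = 1 := by
      rw [← Real.rpow_add hr]
      norm_num
    linear_combination (r ^ ((N:ℝ)-2)) * hUr r hr + (((N:ℝ)-2)*η - Φ r) * i0
  have hsGΦ : ∀ r : ℝ, 0 < r → r ^ ((N:ℝ)-2) * G r ≤ Φ r := by
    intro r hr
    have i0 : r ^ ((N:ℝ)-2) * r ^ (2-(N:ℝ)) = 1 := by
      rw [← Real.rpow_add hr]
      norm_num
    have h1 : G r ≤ r ^ (2-(N:ℝ)) * Φ r := by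
      have := setIntegral_mono_on (hψint r hr) ((hφint r hr).const_mul (r ^ (2-(N:ℝ))))
        measurableSet_Ioi (hψφ r hr)
      rwa [integral_const_mul] at this
    calc r ^ ((N:ℝ)-2) * G r ≤ r ^ ((N:ℝ)-2) * (r ^ (2-(N:ℝ)) * Φ r) :=
          mul_le_mul_of_nonneg_left h1 (Real.rpow_nonneg hr.le _)
      _ = Φ r := by rw [← mul_assoc, i0, one_mul]
  -- the limit
  have hlim : Tendsto (fun r : ℝ => r ^ ((N:ℝ)-2) * U r) atTop (𝓝 η) := by
    have hub : ∀ᶠ r in atTop, r ^ ((N:ℝ)-2) * U r ≤ η := by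
      filter_upwards [eventually_gt_atTop 0] with r hr
      have h := hw_eq r hr
      have h2 := hsGΦ r hr
      refine le_of_mul_le_mul_left ?_ hN2
      linarith
    have hlb : ∀ᶠ r in atTop, η - (1/((N:ℝ)-2)) * Φ r ≤ r ^ ((N:ℝ)-2) * U r := by
      filter_upwards [eventually_gt_atTop 0] with r hr
      have h := hw_eq r hr
      have h2 : 0 ≤ r ^ ((N:ℝ)-2) * G r :=
        mul_nonneg (Real.rpow_nonneg hr.le _) (hGnn r hr)
      have h3 : ((N:ℝ)-2) * (η - (1/((N:ℝ)-2)) * Φ r) = ((N:ℝ)-2)*η - Φ r := by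
        field_simp
      refine le_of_mul_le_mul_left ?_ hN2
      rw [h3]
      linarith
    have hlbt : Tendsto (fun r : ℝ => η - (1/((N:ℝ)-2)) * Φ r) atTop (𝓝 η) := by
      have := tendsto_const_nhds (x := η) (f := atTop (α := ℝ)) |>.sub
        (hΦ0.const_mul (1/((N:ℝ)-2)))
      simpa using this
    exact tendsto_of_tendsto_of_tendsto_of_le_of_le' hlbt tendsto_const_nhds hlb hub
  -- positivity of G
  have hGpos : ∀ r : ℝ, 0 < r → 0 < G r := by
    intro r hr
    have hsplit : (∫ t in Ioi r, ψ t) = (∫ t in Ioc r (r+1), ψ t) + ∫ t in Ioi (r+1), ψ t :=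
      tail_split' (by linarith) (hψint r hr)
    have h1 : 0 < ∫ t in Ioc r (r+1), ψ t := by
      rw [← intervalIntegral.integral_of_le (by linarith : r ≤ r+1)]
      refine intervalIntegral.intervalIntegral_pos_of_pos_on ?_ ?_ (by linarith)
      · refine (hψcont.mono ?_).intervalIntegrable
        intro x hx
        exact lt_of_lt_of_le (lt_inf_iff.mpr ⟨hr, by linarith⟩) hx.1
      · intro x hx
        exact mul_pos (hr.trans hx.1) (hgpos x (hr.trans hx.1))
    have h2 : 0 ≤ ∫ t in Ioi (r+1), ψ t := hGnn (r+1) (by linarith)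
    calc (0:ℝ) < (∫ t in Ioc r (r+1), ψ t) + ∫ t in Ioi (r+1), ψ t := by linarith
      _ = G r := hsplit.symm
  -- strict monotonicity derivative identity
  have hwd : ∀ r : ℝ, 0 < r → HasDerivAt (fun x : ℝ => x ^ ((N:ℝ)-2) * U x)
      (((N:ℝ)-2) * r ^ ((N:ℝ)-2-1) * U r + r ^ ((N:ℝ)-2) * deriv U r) r := by
    intro r hr
    have h1 : HasDerivAt (fun x : ℝ => x ^ ((N:ℝ)-2)) (((N:ℝ)-2) * r ^ ((N:ℝ)-2-1)) r :=
      Real.hasDerivAt_rpow_const (Or.inl (ne_of_gt hr))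
    exact h1.mul (hUd r hr)
  have hwpos : ∀ r : ℝ, 0 < r →
      0 < ((N:ℝ)-2) * r ^ ((N:ℝ)-2-1) * U r + r ^ ((N:ℝ)-2) * deriv U r := by
    intro r hr
    have i_ac : r ^ ((N:ℝ)-2-1) * r ^ (2-(N:ℝ)) = r ^ (-1:ℝ) := by
      rw [← Real.rpow_add hr]
      congr 1
      ring
    have i_be : r ^ ((N:ℝ)-2) * r ^ (1-(N:ℝ)) = r ^ (-1:ℝ) := by
      rw [← Real.rpow_add hr]
      congr 1
      ring
    have key : ((N:ℝ)-2) * r ^ ((N:ℝ)-2-1) * U r + r ^ ((N:ℝ)-2) * deriv U r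
        = r ^ ((N:ℝ)-2-1) * G r := by
      rw [hU'eq r hr, hLη]
      linear_combination (r ^ ((N:ℝ)-2-1)) * hUr r hr
        + (((N:ℝ)-2)*η - Φ r) * i_ac + (Φ r - ((N:ℝ)-2)*η) * i_be
    rw [key]
    exact mul_pos (Real.rpow_pos_of_pos hr _) (hGpos r hr)
  have hmono : StrictMonoOn (fun r : ℝ => r ^ ((N:ℝ)-2) * U r) (Ioi 0) := by
    refine strictMonoOn_of_deriv_pos (convex_Ioi 0) ?_ ?_
    · exact (continuousOn_id.rpow_const fun x hx => Or.inl (ne_of_gt hx)).mul hUcont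
    · rw [interior_Ioi]
      intro x hx
      rw [(hwd x hx).deriv]
      exact hwpos x hx
  -- formula 1
  have hF1 : ∀ r : ℝ, 0 < r → deriv U r = r ^ (1-(N:ℝ)) *
      (-((N:ℝ)-2) * η + ∫ s in Ioi r, s ^ ((N:ℝ)-1) * (K s * U s ^ p + μ * f s)) := by
    intro r hr
    rw [hU'eq r hr, hLη]
  -- formula 2
  have hF2 : ∀ r : ℝ, 0 < r → U r = r ^ (2-(N:ℝ)) * η - (1/((N:ℝ)-2)) *
      ∫ t in Ioi r,
        (r ^ (2-(N:ℝ)) - t ^ (2-(N:ℝ))) * t ^ ((N:ℝ)-1) * (K t * U t ^ p + μ * f t) := by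
    intro r hr
    have hcong : (∫ t in Ioi r,
          (r ^ (2-(N:ℝ)) - t ^ (2-(N:ℝ))) * t ^ ((N:ℝ)-1) * (K t * U t ^ p + μ * f t))
        = ∫ t in Ioi r, (r ^ (2-(N:ℝ)) * φ t - ψ t) := by
      refine setIntegral_congr_fun measurableSet_Ioi (fun t ht => ?_)
      have ht0 : 0 < t := hr.trans ht
      have e3 : t ^ (2-(N:ℝ)) * t ^ ((N:ℝ)-1) = t := by
        rw [← Real.rpow_add ht0]
        norm_num
      simp only [hφ_def, hψ_def, hg_def]
      calc (r ^ (2-(N:ℝ)) - t ^ (2-(N:ℝ))) * t ^ ((N:ℝ)-1) * (K t * U t ^ p + μ * f t)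
          = r ^ (2-(N:ℝ)) * (t ^ ((N:ℝ)-1) * (K t * U t ^ p + μ * f t))
            - (t ^ (2-(N:ℝ)) * t ^ ((N:ℝ)-1)) * (K t * U t ^ p + μ * f t) := by ring
        _ = _ := by rw [e3]
    have hsub : (∫ t in Ioi r, (r ^ (2-(N:ℝ)) * φ t - ψ t))
        = r ^ (2-(N:ℝ)) * Φ r - G r := by
      rw [integral_sub ((hφint r hr).const_mul _) (hψint r hr), integral_const_mul]
    rw [hcong, hsub, hUV r hr]
    simp only [hV_def]
    ring
  exact ⟨η, hlim, hF1, hF2, hmono⟩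
end
end
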